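/- Let ⟨X,Y⟩ be a safe pair of axioms. A full nested sequent is provable in NCK' + X^{↓}_s + Y•_s if and only if it is provable in NCK' + X^{↓} + Y•. -/

import Mathlib

/-! # Constructive modal logic: formulas and Hilbert systems -/

inductive Formula : Type
  | var : Nat → Formula
  | bot : Formula
  | and : Formula → Formula → Formula
  | or  : Formula → Formula → Formula
  | imp : Formula → Formula → Formula
  | box : Formula → Formula
  | dia : Formula → Formula
  deriving DecidableEq

/-- ⊤ abbreviates ⊥⊃⊥ -/
def Formula.top : Formula := Formula.imp Formula.bot Formula.bot

/-- The five modal axioms d, t, b, 4, 5. -/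
inductive Ax : Type
  | d | t | b | four | five
  deriving DecidableEq

/-- The formula scheme corresponding to each modal axiom. -/
def axForm : Ax → Formula → Formula
  | .d, A => Formula.imp (.box A) (.dia A)
  | .t, A => Formula.and (.imp A (.dia A)) (.imp (.box A) A)
  | .b, A => Formula.and (.imp A (.box (.dia A))) (.imp (.dia (.box A)) A)
  | .four, A => Formula.and (.imp (.dia (.dia A)) (.dia A)) (.imp (.box A) (.box (.box A)))
  | .five, A => Formula.and (.imp (.dia A) (.box (.dia A))) (.imp (.dia (.box A)) (.box A))

/-- The Hilbert system HCK+X: a complete axiomatization of intuitionistic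
propositional logic, plus k1 and k2, plus the modal axiom schemes in X,
closed under modus ponens and necessitation. -/
inductive Hck (X : Set Ax) : Formula → Prop
  | imp1 (A B : Formula) : Hck X (.imp A (.imp B A))
  | imp2 (A B C : Formula) :
      Hck X (.imp (.imp A (.imp B C)) (.imp (.imp A B) (.imp A C)))
  | andI (A B : Formula) : Hck X (.imp A (.imp B (.and A B)))
  | andE1 (A B : Formula) : Hck X (.imp (.and A B) A)
  | andE2 (A B : Formula) : Hck X (.imp (.and A B) B)
  | orI1 (A B : Formula) : Hck X (.imp A (.or A B))
  | orI2 (A B : Formula) : Hck X (.imp B (.or A B))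
  | orE (A B C : Formula) :
      Hck X (.imp (.imp A C) (.imp (.imp B C) (.imp (.or A B) C)))
  | exfalso (A : Formula) : Hck X (.imp .bot A)
  | k1 (A B : Formula) : Hck X (.imp (.box (.imp A B)) (.imp (.box A) (.box B)))
  | k2 (A B : Formula) : Hck X (.imp (.box (.imp A B)) (.imp (.dia A) (.dia B)))
  | ax {x : Ax} (A : Formula) : x ∈ X → Hck X (axForm x A)
  | mp {A B : Formula} : Hck X (.imp A B) → Hck X A → Hck X B
  | nec {A : Formula} : Hck X A → Hck X (.box A)

/-! # Nested sequents -/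

/-- LHS sequents: Φ ::= ∅ | A• | [Φ] | Φ,Φ -/
inductive LHS : Type
  | emp : LHS
  | fml : Formula → LHS
  | br : LHS → LHS
  | comma : LHS → LHS → LHS

/-- RHS sequents: Ψ ::= A∘ | [Φ,Ψ] -/
inductive RHS : Type
  | fml : Formula → RHS
  | br : LHS → RHS → RHS

/-- A full sequent: Φ,Ψ with exactly one output formula. -/
structure FullSeq where
  L : LHS
  R : RHS

/-- Corresponding formula of an LHS sequent. -/
def LHS.fm : LHS → Formula
  | .emp => Formula.top
  | .fml A => A
  | .br Φ => Formula.dia Φ.fm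
  | .comma Φ₁ Φ₂ => Formula.and Φ₁.fm Φ₂.fm

/-- Corresponding formula of an RHS sequent. -/
def RHS.fm : RHS → Formula
  | .fml A => A
  | .br Φ Ψ => Formula.box (Formula.imp Φ.fm Ψ.fm)

/-- Corresponding formula of a full sequent: fm(Φ,Ψ) = fm(Φ) ⊃ fm(Ψ). -/
def FullSeq.fm (S : FullSeq) : Formula := Formula.imp S.L.fm S.R.fm

/-! # Contexts -/

/-- An output context: Γ₁•,[Γ₂•,[…,[Γₙ•,{ }]…]]. -/
inductive OutCtx : Type
  | hole : LHS → OutCtx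
  | cons : LHS → OutCtx → OutCtx

/-- Filling an output context with an LHS sequent yields an LHS sequent. -/
def OutCtx.fillL : OutCtx → LHS → LHS
  | .hole Φ, Δ => Φ.comma Δ
  | .cons Φ C, Δ => Φ.comma (LHS.br (C.fillL Δ))

/-- Filling an output context with nothing (∅) yields an LHS sequent. -/
def OutCtx.fillE : OutCtx → LHS
  | .hole Φ => Φ
  | .cons Φ C => Φ.comma (LHS.br C.fillE)

/-- Filling an output context with an RHS sequent yields a full sequent. -/
def OutCtx.fillR : OutCtx → RHS → FullSeq
  | .hole Φ, Ψ => ⟨Φ, Ψ⟩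
  | .cons Φ C, Ψ => ⟨Φ, RHS.br (C.fillR Ψ).L (C.fillR Ψ).R⟩

/-- Filling an output context with a full sequent yields a full sequent. -/
def OutCtx.fillF : OutCtx → FullSeq → FullSeq
  | .hole Φ, S => ⟨Φ.comma S.L, S.R⟩
  | .cons Φ C, S => ⟨Φ, RHS.br (C.fillF S).L (C.fillF S).R⟩

/-- Depth of an output context: number of brackets around the hole. -/
def OutCtx.depth : OutCtx → Nat
  | .hole _ => 0
  | .cons _ C => C.depth + 1

def OutCtx.addL : LHS → OutCtx → OutCtx
  | Φ, .hole Φ' => .hole (Φ.comma Φ')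
  | Φ, .cons Φ' C => .cons (Φ.comma Φ') C

/-- Composition of output contexts (plugging one into the hole of the other). -/
def OutCtx.comp : OutCtx → OutCtx → OutCtx
  | .hole Φ, C => OutCtx.addL Φ C
  | .cons Φ C, C' => .cons Φ (C.comp C')

/-- An input context Γ'{Λ{ },Π∘} with Γ'{ }, Λ{ } output contexts, Π∘ an RHS
sequent.  Filled with an LHS sequent it yields a full sequent. -/
structure InCtx where
  outer : OutCtx
  inner : OutCtx
  out : RHS

/-- Filling an input context with an LHS sequent. -/
def InCtx.fill (G : InCtx) (Δ : LHS) : FullSeq :=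
  G.outer.fillF ⟨G.inner.fillL Δ, G.out⟩

/-- Output pruning Γ↓{ } = Γ'{Λ{ }} of an input context Γ'{Λ{ },Π∘}. -/
def InCtx.prune (G : InCtx) : OutCtx := G.outer.comp G.inner

/-- Depth of an input context. -/
def InCtx.depth (G : InCtx) : Nat := G.outer.depth + G.inner.depth

/-- [Φ]ⁿ : n brackets around an LHS sequent. -/
def LHS.brn : Nat → LHS → LHS
  | 0, Φ => Φ
  | n+1, Φ => LHS.br (LHS.brn n Φ)

/-- [Σ]ⁿ : n brackets around a full sequent (as a full sequent). -/
def FullSeq.nest : Nat → FullSeq → FullSeq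
  | 0, S => S
  | n+1, S => ⟨LHS.emp, RHS.br (FullSeq.nest n S).L (FullSeq.nest n S).R⟩

/-! # Equivalence of sequents (associativity/commutativity/unit of comma) -/

inductive SEqL : LHS → LHS → Prop
  | refl (Φ : LHS) : SEqL Φ Φ
  | symm {a b : LHS} : SEqL a b → SEqL b a
  | trans {a b c : LHS} : SEqL a b → SEqL b c → SEqL a c
  | comm (a b : LHS) : SEqL (a.comma b) (b.comma a)
  | assoc (a b c : LHS) : SEqL ((a.comma b).comma c) (a.comma (b.comma c))
  | unit (a : LHS) : SEqL (LHS.emp.comma a) a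
  | congComma {a a' b b' : LHS} : SEqL a a' → SEqL b b' → SEqL (a.comma b) (a'.comma b')
  | congBr {a a' : LHS} : SEqL a a' → SEqL a.br a'.br

inductive SEqR : RHS → RHS → Prop
  | refl (Ψ : RHS) : SEqR Ψ Ψ
  | symm {a b : RHS} : SEqR a b → SEqR b a
  | trans {a b c : RHS} : SEqR a b → SEqR b c → SEqR a c
  | congBr {Φ Φ' : LHS} {Ψ Ψ' : RHS} :
      SEqL Φ Φ' → SEqR Ψ Ψ' → SEqR (RHS.br Φ Ψ) (RHS.br Φ' Ψ')

def SEq (S T : FullSeq) : Prop := SEqL S.L T.L ∧ SEqR S.R T.R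

/-! # Inference rules -/

inductive RuleName : Type
  | id | botL | andL | andR | orL | orR | impL | impR
  | boxL | boxR | diaL | diaHatL | diaR | cont
  | weak | cut | nec
  | dDiaR | dBoxL | tDiaR | tBoxL | fourDiaR | fourBoxL
  | dSt | tSt | bSt | fourSt | fiveSt
  | s4R | s4L | s4Rdia | s4Lbox
  | sbSt | s5St | s5bSt | sb5St
  deriving DecidableEq

/-- Rule instances: `Step r prems concl` means that inferring the full sequent
`concl` from the list of full sequents `prems` is an instance of the rule `r`. -/
inductive Step : RuleName → List FullSeq → FullSeq → Prop
  /- id: Γ{a•,a∘} -/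
  | id (Γ : OutCtx) (a : Nat) :
      Step .id [] (Γ.fillF ⟨.fml (.var a), .fml (.var a)⟩)
  /- ⊥•: Γ{⊥•,Π∘} -/
  | botL (Γ : OutCtx) (Pn : RHS) :
      Step .botL [] (Γ.fillF ⟨.fml .bot, Pn⟩)
  /- ∧•: from Γ{A•,B•} infer Γ{(A∧B)•} -/
  | andL (Γ : InCtx) (A B : Formula) :
      Step .andL [Γ.fill ((LHS.fml A).comma (.fml B))] (Γ.fill (.fml (A.and B)))
  /- ∧∘: from Γ{A∘} and Γ{B∘} infer Γ{(A∧B)∘} -/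
  | andR (Γ : OutCtx) (A B : Formula) :
      Step .andR [Γ.fillR (.fml A), Γ.fillR (.fml B)] (Γ.fillR (.fml (A.and B)))
  /- ∨•: from Γ{A•,Π∘} and Γ{B•,Π∘} infer Γ{(A∨B)•,Π∘} -/
  | orL (Γ : OutCtx) (Pn : RHS) (A B : Formula) :
      Step .orL [Γ.fillF ⟨.fml A, Pn⟩, Γ.fillF ⟨.fml B, Pn⟩]
        (Γ.fillF ⟨.fml (A.or B), Pn⟩)
  /- ∨∘: from Γ{A∘} (or Γ{B∘}) infer Γ{(A∨B)∘} -/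
  | orR1 (Γ : OutCtx) (A B : Formula) :
      Step .orR [Γ.fillR (.fml A)] (Γ.fillR (.fml (A.or B)))
  | orR2 (Γ : OutCtx) (A B : Formula) :
      Step .orR [Γ.fillR (.fml B)] (Γ.fillR (.fml (A.or B)))
  /- ⊃•: from Γ↓{A∘} and Γ{B•} infer Γ{(A⊃B)•} -/
  | impL (Γ : InCtx) (A B : Formula) :
      Step .impL [Γ.prune.fillR (.fml A), Γ.fill (.fml B)] (Γ.fill (.fml (A.imp B)))
  /- ⊃∘: from Γ{A•,B∘} infer Γ{(A⊃B)∘} -/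
  | impR (Γ : OutCtx) (A B : Formula) :
      Step .impR [Γ.fillF ⟨.fml A, .fml B⟩] (Γ.fillR (.fml (A.imp B)))
  /- □•: from Γ{[A•,Δ]} infer Γ{(□A)•,[Δ]}, output elsewhere resp. in Δ -/
  | boxLIn (Γ : InCtx) (Δ : LHS) (A : Formula) :
      Step .boxL [Γ.fill (LHS.br ((LHS.fml A).comma Δ))]
        (Γ.fill ((LHS.fml A.box).comma Δ.br))
  | boxLOut (Γ : OutCtx) (Δ : FullSeq) (A : Formula) :
      Step .boxL [Γ.fillR (.br ((LHS.fml A).comma Δ.L) Δ.R)]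
        (Γ.fillF ⟨.fml A.box, .br Δ.L Δ.R⟩)
  /- □∘: from Γ{[A∘]} infer Γ{(□A)∘} -/
  | boxR (Γ : OutCtx) (A : Formula) :
      Step .boxR [Γ.fillR (.br .emp (.fml A))] (Γ.fillR (.fml A.box))
  /- ◇•: from Γ{[A•]} infer Γ{(◇A)•} -/
  | diaL (Γ : InCtx) (A : Formula) :
      Step .diaL [Γ.fill (LHS.br (.fml A))] (Γ.fill (.fml A.dia))
  /- ◇̂•: from Γ{[A•],Π∘} infer Γ{(◇A)•,Π∘} -/
  | diaHatL (Γ : OutCtx) (Pn : RHS) (A : Formula) :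
      Step .diaHatL [Γ.fillF ⟨LHS.br (.fml A), Pn⟩] (Γ.fillF ⟨.fml A.dia, Pn⟩)
  /- ◇∘: from Γ{[A∘,Δ]} infer Γ{(◇A)∘,[Δ]} -/
  | diaR (Γ : OutCtx) (Δ : LHS) (A : Formula) :
      Step .diaR [Γ.fillR (.br Δ (.fml A))] (Γ.fillF ⟨Δ.br, .fml A.dia⟩)
  /- cont: from Γ{Δ•,Δ•} infer Γ{Δ•} -/
  | cont (Γ : InCtx) (Δ : LHS) :
      Step .cont [Γ.fill (Δ.comma Δ)] (Γ.fill Δ)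
  /- weak: from Γ{∅} infer Γ{Δ•} -/
  | weak (Γ : InCtx) (Δ : LHS) :
      Step .weak [Γ.fill .emp] (Γ.fill Δ)
  /- cut: from Γ↓{A∘} and Γ{A•} infer Γ{∅} -/
  | cut (Γ : InCtx) (A : Formula) :
      Step .cut [Γ.prune.fillR (.fml A), Γ.fill (.fml A)] (Γ.fill .emp)
  /- nec: from Γ infer [Γ] -/
  | nec (S : FullSeq) :
      Step .nec [S] ⟨.emp, .br S.L S.R⟩
  /- ◇∘d: from Γ{[A∘]} infer Γ{(◇A)∘} -/
  | dDiaR (Γ : OutCtx) (A : Formula) :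
      Step .dDiaR [Γ.fillR (.br .emp (.fml A))] (Γ.fillR (.fml A.dia))
  /- □•d: from Γ{[A•]} infer Γ{(□A)•} -/
  | dBoxL (Γ : InCtx) (A : Formula) :
      Step .dBoxL [Γ.fill (LHS.br (.fml A))] (Γ.fill (.fml A.box))
  /- ◇∘t: from Γ{A∘} infer Γ{(◇A)∘} -/
  | tDiaR (Γ : OutCtx) (A : Formula) :
      Step .tDiaR [Γ.fillR (.fml A)] (Γ.fillR (.fml A.dia))
  /- □•t: from Γ{A•} infer Γ{(□A)•} -/
  | tBoxL (Γ : InCtx) (A : Formula) :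
      Step .tBoxL [Γ.fill (.fml A)] (Γ.fill (.fml A.box))
  /- ◇∘4: from Γ{[(◇A)∘,Δ]} infer Γ{(◇A)∘,[Δ]} -/
  | fourDiaR (Γ : OutCtx) (Δ : LHS) (A : Formula) :
      Step .fourDiaR [Γ.fillR (.br Δ (.fml A.dia))] (Γ.fillF ⟨Δ.br, .fml A.dia⟩)
  /- □•4: from Γ{[(□A)•,Δ]} infer Γ{(□A)•,[Δ]} -/
  | fourBoxLIn (Γ : InCtx) (Δ : LHS) (A : Formula) :
      Step .fourBoxL [Γ.fill (LHS.br ((LHS.fml A.box).comma Δ))]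
        (Γ.fill ((LHS.fml A.box).comma Δ.br))
  | fourBoxLOut (Γ : OutCtx) (Δ : FullSeq) (A : Formula) :
      Step .fourBoxL [Γ.fillR (.br ((LHS.fml A.box).comma Δ.L) Δ.R)]
        (Γ.fillF ⟨.fml A.box, .br Δ.L Δ.R⟩)
  /- d•: from Γ{[∅]} infer Γ{∅} -/
  | dSt (Γ : InCtx) :
      Step .dSt [Γ.fill (LHS.br .emp)] (Γ.fill .emp)
  /- t•: from Γ{[Σ]} infer Γ{Σ} -/
  | tStIn (Γ : InCtx) (Sg : LHS) :
      Step .tSt [Γ.fill Sg.br] (Γ.fill Sg)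
  | tStOut (Γ : OutCtx) (Sg : FullSeq) :
      Step .tSt [Γ.fillR (.br Sg.L Sg.R)] (Γ.fillF Sg)
  /- 4•: from Γ{[Σ]} infer Γ{[[Σ]]} -/
  | fourStIn (Γ : InCtx) (Sg : LHS) :
      Step .fourSt [Γ.fill Sg.br] (Γ.fill Sg.br.br)
  | fourStOut (Γ : OutCtx) (Sg : FullSeq) :
      Step .fourSt [Γ.fillR (.br Sg.L Sg.R)] (Γ.fillR (.br .emp (.br Sg.L Sg.R)))
  /- b•: from Γ{[[Σ],Δ]} infer Γ{Σ,[Δ]} -/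
  | bStIn (Γ : InCtx) (Sg Δ : LHS) :
      Step .bSt [Γ.fill (LHS.br (Sg.br.comma Δ))] (Γ.fill (Sg.comma Δ.br))
  | bStSig (Γ : OutCtx) (Sg : FullSeq) (Δ : LHS) :
      Step .bSt [Γ.fillR (.br Δ (.br Sg.L Sg.R))] (Γ.fillF ⟨Sg.L.comma Δ.br, Sg.R⟩)
  | bStDel (Γ : OutCtx) (Sg : LHS) (Δ : FullSeq) :
      Step .bSt [Γ.fillR (.br (Sg.br.comma Δ.L) Δ.R)] (Γ.fillF ⟨Sg, .br Δ.L Δ.R⟩)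
  /- 5•: from Γ{[[Σ],Δ]} infer Γ{[Σ],[Δ]} -/
  | fiveStIn (Γ : InCtx) (Sg Δ : LHS) :
      Step .fiveSt [Γ.fill (LHS.br (Sg.br.comma Δ))] (Γ.fill (Sg.br.comma Δ.br))
  | fiveStSig (Γ : OutCtx) (Sg : FullSeq) (Δ : LHS) :
      Step .fiveSt [Γ.fillR (.br Δ (.br Sg.L Sg.R))] (Γ.fillF ⟨Δ.br, .br Sg.L Sg.R⟩)
  | fiveStDel (Γ : OutCtx) (Sg : LHS) (Δ : FullSeq) :
      Step .fiveSt [Γ.fillR (.br (Sg.br.comma Δ.L) Δ.R)] (Γ.fillF ⟨Sg.br, .br Δ.L Δ.R⟩)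
  /- s4∘: from Γ{Δ{(◇A)∘}} infer Γ{(◇A)∘,Δ{∅}} -/
  | s4R (Γ Δ : OutCtx) (A : Formula) :
      Step .s4R [Γ.fillF (Δ.fillR (.fml A.dia))] (Γ.fillF ⟨Δ.fillE, .fml A.dia⟩)
  /- s4•: from Γ{Δ{(□A)•}} infer Γ{(□A)•,Δ{∅}} -/
  | s4LIn (Γ : InCtx) (Δ : OutCtx) (A : Formula) :
      Step .s4L [Γ.fill (Δ.fillL (.fml A.box))] (Γ.fill ((LHS.fml A.box).comma Δ.fillE))
  | s4LOut (Γ : OutCtx) (Δ : InCtx) (A : Formula) :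
      Step .s4L [Γ.fillF (Δ.fill (.fml A.box))]
        (Γ.fillF ⟨(LHS.fml A.box).comma (Δ.fill .emp).L, (Δ.fill .emp).R⟩)
  /- s4∘◇: from Γ{[Δ{A∘}]} infer Γ{(◇A)∘,[Δ{∅}]} -/
  | s4Rdia (Γ Δ : OutCtx) (A : Formula) :
      Step .s4Rdia [Γ.fillR (.br (Δ.fillR (.fml A)).L (Δ.fillR (.fml A)).R)]
        (Γ.fillF ⟨Δ.fillE.br, .fml A.dia⟩)
  /- s4•□: from Γ{[Δ{A•}]} infer Γ{(□A)•,[Δ{∅}]} -/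
  | s4LboxIn (Γ : InCtx) (Δ : OutCtx) (A : Formula) :
      Step .s4Lbox [Γ.fill (LHS.br (Δ.fillL (.fml A)))]
        (Γ.fill ((LHS.fml A.box).comma Δ.fillE.br))
  | s4LboxOut (Γ : OutCtx) (Δ : InCtx) (A : Formula) :
      Step .s4Lbox [Γ.fillR (.br (Δ.fill (.fml A)).L (Δ.fill (.fml A)).R)]
        (Γ.fillF ⟨.fml A.box, .br (Δ.fill .emp).L (Δ.fill .emp).R⟩)
  /- sb•: from Γ{Δ{[Σ]ⁿ}} infer Γ{Σ,Δ{∅}}, n the depth of Δ{ } -/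
  | sbStIn (Γ : InCtx) (Δ : OutCtx) (Sg : LHS) :
      Step .sbSt [Γ.fill (Δ.fillL (LHS.brn Δ.depth Sg))] (Γ.fill (Sg.comma Δ.fillE))
  | sbStMid (Γ : OutCtx) (Δ : InCtx) (Sg : LHS) :
      Step .sbSt [Γ.fillF (Δ.fill (LHS.brn Δ.depth Sg))]
        (Γ.fillF ⟨Sg.comma (Δ.fill .emp).L, (Δ.fill .emp).R⟩)
  | sbStOut (Γ Δ : OutCtx) (Sg : FullSeq) :
      Step .sbSt [Γ.fillF (Δ.fillF (FullSeq.nest Δ.depth Sg))]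
        (Γ.fillF ⟨Sg.L.comma Δ.fillE, Sg.R⟩)
  /- s5•: from Γ{Δ{[Σ]}} infer Γ{[Σ],Δ{∅}} -/
  | s5StIn (Γ : InCtx) (Δ : OutCtx) (Sg : LHS) :
      Step .s5St [Γ.fill (Δ.fillL Sg.br)] (Γ.fill (Sg.br.comma Δ.fillE))
  | s5StMid (Γ : OutCtx) (Δ : InCtx) (Sg : LHS) :
      Step .s5St [Γ.fillF (Δ.fill Sg.br)]
        (Γ.fillF ⟨Sg.br.comma (Δ.fill .emp).L, (Δ.fill .emp).R⟩)
  | s5StOut (Γ Δ : OutCtx) (Sg : FullSeq) :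
      Step .s5St [Γ.fillF (Δ.fillF ⟨.emp, .br Sg.L Sg.R⟩)]
        (Γ.fillF ⟨Δ.fillE, .br Sg.L Sg.R⟩)
  /- s5b•: from Γ{Δ{[Σ]ᵏ}} infer Γ{Σ,Δ{∅}}, 1 ≤ k ≤ depth of Δ{ } -/
  | s5bStIn (Γ : InCtx) (Δ : OutCtx) (Sg : LHS) (k : Nat)
      (h1 : 1 ≤ k) (h2 : k ≤ Δ.depth) :
      Step .s5bSt [Γ.fill (Δ.fillL (LHS.brn k Sg))] (Γ.fill (Sg.comma Δ.fillE))
  | s5bStMid (Γ : OutCtx) (Δ : InCtx) (Sg : LHS) (k : Nat)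
      (h1 : 1 ≤ k) (h2 : k ≤ Δ.depth) :
      Step .s5bSt [Γ.fillF (Δ.fill (LHS.brn k Sg))]
        (Γ.fillF ⟨Sg.comma (Δ.fill .emp).L, (Δ.fill .emp).R⟩)
  | s5bStOut (Γ Δ : OutCtx) (Sg : FullSeq) (k : Nat)
      (h1 : 1 ≤ k) (h2 : k ≤ Δ.depth) :
      Step .s5bSt [Γ.fillF (Δ.fillF (FullSeq.nest k Sg))]
        (Γ.fillF ⟨Sg.L.comma Δ.fillE, Sg.R⟩)
  /- sb5•: from Γ{Δ{[Σ]ᵏ}} infer Γ{[Σ],Δ{∅}}, 1 ≤ k ≤ depth of Δ{ } -/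
  | sb5StIn (Γ : InCtx) (Δ : OutCtx) (Sg : LHS) (k : Nat)
      (h1 : 1 ≤ k) (h2 : k ≤ Δ.depth) :
      Step .sb5St [Γ.fill (Δ.fillL (LHS.brn k Sg))] (Γ.fill (Sg.br.comma Δ.fillE))
  | sb5StMid (Γ : OutCtx) (Δ : InCtx) (Sg : LHS) (k : Nat)
      (h1 : 1 ≤ k) (h2 : k ≤ Δ.depth) :
      Step .sb5St [Γ.fillF (Δ.fill (LHS.brn k Sg))]
        (Γ.fillF ⟨Sg.br.comma (Δ.fill .emp).L, (Δ.fill .emp).R⟩)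
  | sb5StOut (Γ Δ : OutCtx) (Sg : FullSeq) (k : Nat)
      (h1 : 1 ≤ k) (h2 : k ≤ Δ.depth) :
      Step .sb5St [Γ.fillF (Δ.fillF (FullSeq.nest k Sg))]
        (Γ.fillF ⟨Δ.fillE, .br Sg.L Sg.R⟩)

/-! # Derivations -/

/-- `Deriv R n S`: the full sequent S has a derivation of height at most n
using the rules in R (sequents are treated up to AC-unit equivalence of
comma). -/
inductive Deriv (R : Set RuleName) : Nat → FullSeq → Prop
  | step {r : RuleName} {prems : List FullSeq} {S S' : FullSeq} {n : Nat} :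
      r ∈ R → Step r prems S → (∀ P ∈ prems, Deriv R n P) → SEq S S' →
      Deriv R (n+1) S'

/-- Provability in the system given by the rule set R. -/
def Provable (R : Set RuleName) (S : FullSeq) : Prop := ∃ n, Deriv R n S

/-- Derivations from a set of hypotheses (for derivability of rules). -/
inductive DerivFrom (R : Set RuleName) (H : Set FullSeq) : FullSeq → Prop
  | hyp {S S' : FullSeq} : S ∈ H → SEq S S' → DerivFrom R H S'
  | step {r : RuleName} {prems : List FullSeq} {S S' : FullSeq} :
      r ∈ R → Step r prems S → (∀ P ∈ prems, DerivFrom R H P) → SEq S S' →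
      DerivFrom R H S'

/-! # Rule sets -/

/-- The rules of NCK. -/
def NCKrules : Set RuleName :=
  {.id, .botL, .andL, .andR, .orL, .orR, .impL, .impR, .boxL, .boxR,
   .diaL, .diaR, .cont}

/-- The rules of NCK' (◇• replaced by ◇̂•). -/
def NCKP : Set RuleName :=
  {.id, .botL, .andL, .andR, .orL, .orR, .impL, .impR, .boxL, .boxR,
   .diaHatL, .diaR, .cont}

/-- X^{↓}: the logical ◇∘- and □•-rules for the axioms in X ⊆ {d,t,4}. -/
def lgRules (X : Set Ax) : Set RuleName := fun r =>
  (Ax.d ∈ X ∧ (r = .dDiaR ∨ r = .dBoxL)) ∨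
  (Ax.t ∈ X ∧ (r = .tDiaR ∨ r = .tBoxL)) ∨
  (Ax.four ∈ X ∧ (r = .fourDiaR ∨ r = .fourBoxL))

/-- The structural rule corresponding to a modal axiom. -/
def stRule : Ax → RuleName
  | .d => .dSt
  | .t => .tSt
  | .b => .bSt
  | .four => .fourSt
  | .five => .fiveSt

/-- Y•: the structural rules for the axioms in Y. -/
def stRules (Y : Set Ax) : Set RuleName := fun r => ∃ y ∈ Y, r = stRule y

/-- X^{↓}_s : the super variant of X^{↓}. -/
def lgRulesS (X : Set Ax) : Set RuleName := fun r =>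
  (r ∈ lgRules X ∧ r ≠ .fourDiaR ∧ r ≠ .fourBoxL) ∨
  (Ax.four ∈ X ∧ (r = .s4R ∨ r = .s4L ∨ r = .s4Rdia ∨ r = .s4Lbox))

/-- Y•_s : the super variant of Y•. -/
def stRulesS (Y : Set Ax) : Set RuleName := fun r =>
  (r ∈ stRules Y ∧ r ≠ .bSt ∧ r ≠ .fiveSt) ∨
  (Ax.b ∈ Y ∧ Ax.five ∉ Y ∧ r = .sbSt) ∨
  (Ax.five ∈ Y ∧ Ax.b ∉ Y ∧ r = .s5St) ∨
  (Ax.b ∈ Y ∧ Ax.five ∈ Y ∧ (r = .s5bSt ∨ r = .sb5St))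

/-- A safe pair of axiom sets. -/
def SafePair (X Y : Set Ax) : Prop :=
  X ⊆ {Ax.t, Ax.four} ∧ Y ⊆ {Ax.d, Ax.b, Ax.five} ∧
  (Ax.t ∈ X → Ax.five ∈ Y → Ax.b ∈ Y) ∧
  ((Ax.b ∈ Y ∨ Ax.five ∈ Y) → Ax.four ∈ X)

/-! ## Auxiliary development for statement17 -/

section Aux

namespace SEqL

lemma congL {a a' b : LHS} (h : SEqL a a') : SEqL (a.comma b) (a'.comma b) :=
  congComma h (refl b)

lemma congR' {a b b' : LHS} (h : SEqL b b') : SEqL (a.comma b) (a.comma b') :=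
  congComma (refl a) h

lemma unitr (a : LHS) : SEqL (a.comma .emp) a := (comm a .emp).trans (unit a)

lemma assoc' (a b c : LHS) : SEqL (a.comma (b.comma c)) ((a.comma b).comma c) :=
  (assoc a b c).symm

lemma swap (a b c : LHS) : SEqL (a.comma (b.comma c)) (b.comma (a.comma c)) :=
  ((assoc' a b c).trans (congL (comm a b))).trans (assoc b a c)

end SEqL

namespace SEq

lemma refl (S : FullSeq) : SEq S S := ⟨.refl _, .refl _⟩

lemma symm {S T : FullSeq} (h : SEq S T) : SEq T S := ⟨h.1.symm, h.2.symm⟩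

lemma trans {S T U : FullSeq} (h : SEq S T) (h' : SEq T U) : SEq S U :=
  ⟨h.1.trans h'.1, h.2.trans h'.2⟩

end SEq

namespace OutCtx

lemma fillL_cong {C : OutCtx} {a b : LHS} (h : SEqL a b) : SEqL (C.fillL a) (C.fillL b) := by
  induction C with
  | hole Φ => exact .congR' h
  | cons Φ C ih => exact .congR' (.congBr ih)

lemma fillF_cong {C : OutCtx} {S T : FullSeq} (h : SEq S T) : SEq (C.fillF S) (C.fillF T) := by
  induction C with
  | hole Φ => exact ⟨.congR' h.1, h.2⟩
  | cons Φ C ih => exact ⟨.refl _, .congBr ih.1 ih.2⟩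

lemma fillR_cong {C : OutCtx} {a b : RHS} (h : SEqR a b) : SEq (C.fillR a) (C.fillR b) := by
  induction C with
  | hole Φ => exact ⟨.refl _, h⟩
  | cons Φ C ih => exact ⟨.refl _, .congBr ih.1 ih.2⟩

lemma fillL_emp (C : OutCtx) : SEqL (C.fillL .emp) C.fillE := by
  induction C with
  | hole Φ => exact .unitr Φ
  | cons Φ C ih => exact .congR' (.congBr ih)

/-- Put an extra LHS beside the hole. -/
def ext : OutCtx → LHS → OutCtx
  | .hole Φ₀, Φ => .hole (Φ₀.comma Φ)
  | .cons Φ₀ C, Φ => .cons Φ₀ (C.ext Φ)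

/-- Replace the hole by a bracketed hole beside an extra LHS. -/
def extC : OutCtx → LHS → OutCtx
  | .hole Φ₀, Φ => .cons Φ₀ (.hole Φ)
  | .cons Φ₀ C, Φ => .cons Φ₀ (C.extC Φ)

@[simp] lemma ext_fillR (C : OutCtx) (Φ : LHS) (Ψ : RHS) :
    (C.ext Φ).fillR Ψ = C.fillF ⟨Φ, Ψ⟩ := by
  induction C with
  | hole Φ₀ => rfl
  | cons Φ₀ C ih => simp [ext, fillR, fillF, ih]

@[simp] lemma ext_fillE (C : OutCtx) (Φ : LHS) : (C.ext Φ).fillE = C.fillL Φ := by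
  induction C with
  | hole Φ₀ => rfl
  | cons Φ₀ C ih => simp [ext, fillE, fillL, ih]

lemma ext_fillL (C : OutCtx) (Φ Δ : LHS) :
    SEqL ((C.ext Φ).fillL Δ) (C.fillL (Φ.comma Δ)) := by
  induction C with
  | hole Φ₀ => exact .assoc Φ₀ Φ Δ
  | cons Φ₀ C ih => exact .congR' (.congBr ih)

lemma ext_fillF (C : OutCtx) (Φ : LHS) (S : FullSeq) :
    SEq ((C.ext Φ).fillF S) (C.fillF ⟨Φ.comma S.L, S.R⟩) := by
  induction C with
  | hole Φ₀ => exact ⟨.assoc Φ₀ Φ S.L, .refl _⟩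
  | cons Φ₀ C ih => exact ⟨.refl _, .congBr ih.1 ih.2⟩

@[simp] lemma extC_fillR (C : OutCtx) (Φ : LHS) (Ψ : RHS) :
    (C.extC Φ).fillR Ψ = C.fillR (.br Φ Ψ) := by
  induction C with
  | hole Φ₀ => rfl
  | cons Φ₀ C ih => simp [extC, fillR, ih]

@[simp] lemma extC_fillF (C : OutCtx) (Φ : LHS) (S : FullSeq) :
    (C.extC Φ).fillF S = C.fillR (.br (Φ.comma S.L) S.R) := by
  induction C with
  | hole Φ₀ => rfl
  | cons Φ₀ C ih => simp [extC, fillF, fillR, ih]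

@[simp] lemma extC_fillL (C : OutCtx) (Φ Δ : LHS) :
    (C.extC Φ).fillL Δ = C.fillL (.br (Φ.comma Δ)) := by
  induction C with
  | hole Φ₀ => rfl
  | cons Φ₀ C ih => simp [extC, fillL, ih]

@[simp] lemma extC_fillE (C : OutCtx) (Φ : LHS) :
    (C.extC Φ).fillE = C.fillL Φ.br := by
  induction C with
  | hole Φ₀ => rfl
  | cons Φ₀ C ih => simp [extC, fillE, fillL, ih]

/-- Put `Φ, [ hole ]` at the hole. -/
def push (C : OutCtx) (Φ : LHS) : OutCtx := (C.ext Φ).extC .emp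

lemma push_fillF (C : OutCtx) (Φ : LHS) (S : FullSeq) :
    SEq ((C.push Φ).fillF S) (C.fillF ⟨Φ, .br S.L S.R⟩) := by
  rw [push, extC_fillF, ext_fillR]
  exact fillF_cong ⟨.refl _, .congBr (.unit _) (.refl _)⟩

lemma comp_fillF (C D : OutCtx) (S : FullSeq) :
    SEq ((C.comp D).fillF S) (C.fillF (D.fillF S)) := by
  induction C with
  | hole Φ =>
    cases D with
    | hole Φ' => exact ⟨.assoc _ _ _, .refl _⟩
    | cons Φ' C' => exact .refl _
  | cons Φ C ih => exact ⟨.refl _, .congBr ih.1 ih.2⟩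

end OutCtx

namespace InCtx

lemma fill_cong {G : InCtx} {a b : LHS} (h : SEqL a b) : SEq (G.fill a) (G.fill b) :=
  OutCtx.fillF_cong ⟨OutCtx.fillL_cong h, .refl _⟩

/-- Put an extra LHS beside the hole. -/
def extI (G : InCtx) (Φ : LHS) : InCtx := ⟨G.outer, G.inner.ext Φ, G.out⟩

lemma extI_fill (G : InCtx) (Φ X : LHS) :
    SEq ((G.extI Φ).fill X) (G.fill (Φ.comma X)) :=
  OutCtx.fillF_cong ⟨OutCtx.ext_fillL _ _ _, .refl _⟩

/-- Replace the hole by a bracketed hole beside an extra LHS. -/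
def extCI (G : InCtx) (Φ : LHS) : InCtx := ⟨G.outer, G.inner.extC Φ, G.out⟩

@[simp] lemma extCI_fill (G : InCtx) (Φ X : LHS) :
    (G.extCI Φ).fill X = G.fill (.br (Φ.comma X)) := by
  simp [extCI, fill]

/-- Put `Φ, [ hole ]` at the hole. -/
def pushI (G : InCtx) (Φ : LHS) : InCtx := ⟨G.outer, G.inner.push Φ, G.out⟩

lemma pushI_fill (G : InCtx) (Φ X : LHS) :
    SEq ((G.pushI Φ).fill X) (G.fill (Φ.comma X.br)) := by
  refine OutCtx.fillF_cong ⟨?_, .refl _⟩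
  show SEqL (((G.inner.ext Φ).extC .emp).fillL X) _
  rw [OutCtx.extC_fillL]
  exact (OutCtx.ext_fillL _ _ _).trans
    (OutCtx.fillL_cong (.congR' (.congBr (.unit X))))

end InCtx

/-- The junction context: a hole directly beside the output of `o`, all inside `Γ`. -/
def jct (Γ o : OutCtx) (p : RHS) : InCtx := ⟨Γ.comp o, .hole .emp, p⟩

lemma jct_fill (Γ o : OutCtx) (p : RHS) (X : LHS) :
    SEq ((jct Γ o p).fill X) (Γ.fillF (o.fillF ⟨X, p⟩)) :=
  (OutCtx.comp_fillF _ _ _).trans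
    (OutCtx.fillF_cong (OutCtx.fillF_cong ⟨.unit X, .refl _⟩))

@[simp] lemma brn_succ' (n : Nat) (Sg : LHS) : LHS.brn (n+1) Sg = LHS.brn n Sg.br := by
  induction n with
  | zero => rfl
  | succ n ih => show LHS.br _ = LHS.br _; rw [← ih]

lemma brn_add (m n : Nat) (Sg : LHS) : LHS.brn m (LHS.brn n Sg) = LHS.brn (m+n) Sg := by
  induction m with
  | zero => rw [Nat.zero_add]; rfl
  | succ m ih =>
    have h : m + 1 + n = (m + n) + 1 := by omega
    rw [h]; show LHS.br _ = LHS.br _; rw [ih]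

lemma nest_succ' (n : Nat) (S : FullSeq) :
    FullSeq.nest (n+1) S = FullSeq.nest n ⟨.emp, .br S.L S.R⟩ := by
  induction n with
  | zero => rfl
  | succ n ih =>
    show FullSeq.mk _ (RHS.br (FullSeq.nest (n+1) S).L (FullSeq.nest (n+1) S).R) = _
    rw [ih]; rfl

lemma Deriv.mono {R : Set RuleName} :
    ∀ {n S}, Deriv R n S → ∀ m, n ≤ m → Deriv R m S := by
  intro n S h
  induction h with
  | @step r prems S S' n hr st hp hs ih =>
    intro m hm
    obtain ⟨m', rfl⟩ : ∃ m', m = m' + 1 := ⟨m-1, by omega⟩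
    exact .step hr st (fun P hP => ih P hP m' (by omega)) hs

lemma prov_step {R : Set RuleName} {r prems S S'} (hr : r ∈ R) (st : Step r prems S)
    (hp : ∀ P ∈ prems, Provable R P) (hs : SEq S S') : Provable R S' := by
  have : ∃ n, ∀ P ∈ prems, Deriv R n P := by
    clear st
    induction prems with
    | nil => exact ⟨0, by simp⟩
    | cons q l ih =>
      obtain ⟨n1, h1⟩ := ih (fun P hP => hp P (List.mem_cons_of_mem _ hP))
      obtain ⟨n2, h2⟩ := hp q (List.mem_cons_self)
      refine ⟨max n1 n2, ?_⟩
      intro P hP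
      rcases List.mem_cons.mp hP with rfl | hP
      · exact h2.mono _ (le_max_right _ _)
      · exact (h1 P hP).mono _ (le_max_left _ _)
  obtain ⟨n, hn⟩ := this
  exact ⟨n+1, .step hr st hn hs⟩

lemma Provable.seq {R : Set RuleName} {S S'} (h : Provable R S) (e : SEq S S') :
    Provable R S' := by
  obtain ⟨n, d⟩ := h
  cases d with
  | step hr st hp hs => exact ⟨_, .step hr st hp (hs.trans e)⟩

lemma prov0 {R : Set RuleName} {r S S'} (hr : r ∈ R) (st : Step r [] S)
    (hs : SEq S S') : Provable R S' :=
  prov_step hr st (by simp) hs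

lemma prov1 {R : Set RuleName} {r P P' S S'} (hr : r ∈ R) (st : Step r [P] S)
    (hP : Provable R P') (e : SEq P' P) (hs : SEq S S') : Provable R S' :=
  prov_step hr st (by simpa using hP.seq e) hs

lemma prov2 {R : Set RuleName} {r P Q P' Q' S S'} (hr : r ∈ R) (st : Step r [P, Q] S)
    (hP : Provable R P') (eP : SEq P' P) (hQ : Provable R Q') (eQ : SEq Q' Q)
    (hs : SEq S S') : Provable R S' := by
  refine prov_step hr st ?_ hs
  rintro T hT
  rcases List.mem_cons.mp hT with rfl | hT
  · exact hP.seq eP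
  · rcases List.mem_cons.mp hT with rfl | hT
    · exact hQ.seq eQ
    · simp at hT

lemma transfer {R R' : Set RuleName}
    (h : ∀ {r prems S}, r ∈ R → Step r prems S → (∀ P ∈ prems, Provable R' P) →
      Provable R' S) :
    ∀ {S}, Provable R S → Provable R' S := by
  rintro S ⟨n, d⟩
  induction d with
  | step hr st hp hs ih => exact (h hr st ih).seq hs

end Aux
section Aux2

lemma mem_stRules {Y : Set Ax} {r : RuleName} :
    r ∈ stRules Y ↔ (r = .dSt ∧ Ax.d ∈ Y) ∨ (r = .tSt ∧ Ax.t ∈ Y) ∨ (r = .bSt ∧ Ax.b ∈ Y) ∨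
      (r = .fourSt ∧ Ax.four ∈ Y) ∨ (r = .fiveSt ∧ Ax.five ∈ Y) := by
  constructor
  · rintro ⟨y, hy, rfl⟩
    cases y
    · exact Or.inl ⟨rfl, hy⟩
    · exact Or.inr (Or.inl ⟨rfl, hy⟩)
    · exact Or.inr (Or.inr (Or.inl ⟨rfl, hy⟩))
    · exact Or.inr (Or.inr (Or.inr (Or.inl ⟨rfl, hy⟩)))
    · exact Or.inr (Or.inr (Or.inr (Or.inr ⟨rfl, hy⟩)))
  · rintro (⟨rfl, h⟩|⟨rfl, h⟩|⟨rfl, h⟩|⟨rfl, h⟩|⟨rfl, h⟩)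
    exacts [⟨.d, h, rfl⟩, ⟨.t, h, rfl⟩, ⟨.b, h, rfl⟩, ⟨.four, h, rfl⟩, ⟨.five, h, rfl⟩]

lemma classifyS {X Y : Set Ax} {r : RuleName} (h : r ∈ NCKP ∪ lgRulesS X ∪ stRulesS Y) :
    r ∈ NCKP ∪ lgRules X ∪ stRules Y ∨
    (Ax.four ∈ X ∧ (r = .s4R ∨ r = .s4L ∨ r = .s4Rdia ∨ r = .s4Lbox)) ∨
    (Ax.b ∈ Y ∧ r = .sbSt) ∨
    (Ax.five ∈ Y ∧ r = .s5St) ∨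
    (Ax.b ∈ Y ∧ Ax.five ∈ Y ∧ (r = .s5bSt ∨ r = .sb5St)) := by
  rcases h with (h | h) | h
  · exact Or.inl (Or.inl (Or.inl h))
  · rcases h with ⟨hlg, -, -⟩ | ⟨h4, hr⟩
    · exact Or.inl (Or.inl (Or.inr hlg))
    · rcases hr with rfl | rfl | rfl | rfl
      · exact Or.inr (Or.inl ⟨h4, Or.inl rfl⟩)
      · exact Or.inr (Or.inl ⟨h4, Or.inr (Or.inl rfl)⟩)
      · exact Or.inr (Or.inl ⟨h4, Or.inr (Or.inr (Or.inl rfl))⟩)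
      · exact Or.inr (Or.inl ⟨h4, Or.inr (Or.inr (Or.inr rfl))⟩)
  · rcases h with ⟨hst, -, -⟩ | ⟨hb, -, rfl⟩ | ⟨h5, -, rfl⟩ | ⟨hb, h5, hr⟩
    · exact Or.inl (Or.inr hst)
    · exact Or.inr (Or.inr (Or.inl ⟨hb, rfl⟩))
    · exact Or.inr (Or.inr (Or.inr (Or.inl ⟨h5, rfl⟩)))
    · exact Or.inr (Or.inr (Or.inr (Or.inr ⟨hb, h5, hr⟩)))

lemma classifyO {X Y : Set Ax} {r : RuleName} (h : r ∈ NCKP ∪ lgRules X ∪ stRules Y) :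
    r ∈ NCKP ∪ lgRulesS X ∪ stRulesS Y ∨
    (Ax.four ∈ X ∧ (r = .fourDiaR ∨ r = .fourBoxL)) ∨
    (Ax.b ∈ Y ∧ r = .bSt) ∨ (Ax.five ∈ Y ∧ r = .fiveSt) := by
  rcases h with (h | h) | h
  · exact Or.inl (Or.inl (Or.inl h))
  · rcases h with ⟨hd, hr⟩ | ⟨ht, hr⟩ | ⟨h4, hr⟩
    · refine Or.inl (Or.inl (Or.inr (Or.inl ⟨Or.inl ⟨hd, hr⟩, ?_, ?_⟩))) <;>
        rcases hr with rfl | rfl <;> simp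
    · refine Or.inl (Or.inl (Or.inr (Or.inl ⟨Or.inr (Or.inl ⟨ht, hr⟩), ?_, ?_⟩))) <;>
        rcases hr with rfl | rfl <;> simp
    · exact Or.inr (Or.inl ⟨h4, hr⟩)
  · rcases mem_stRules.mp h with ⟨rfl, hy⟩|⟨rfl, hy⟩|⟨rfl, hy⟩|⟨rfl, hy⟩|⟨rfl, hy⟩
    · exact Or.inl (Or.inr (Or.inl ⟨h, by simp, by simp⟩))
    · exact Or.inl (Or.inr (Or.inl ⟨h, by simp, by simp⟩))
    · exact Or.inr (Or.inr (Or.inl ⟨hy, rfl⟩))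
    · exact Or.inl (Or.inr (Or.inl ⟨h, by simp, by simp⟩))
    · exact Or.inr (Or.inr (Or.inr ⟨hy, rfl⟩))

variable {X Y : Set Ax}

lemma mem_ord_of_NCKP {r : RuleName} (h : r ∈ NCKP) : r ∈ NCKP ∪ lgRules X ∪ stRules Y :=
  Or.inl (Or.inl h)

lemma mem_fourDiaR (h : Ax.four ∈ X) : RuleName.fourDiaR ∈ NCKP ∪ lgRules X ∪ stRules Y :=
  Or.inl (Or.inr (Or.inr (Or.inr ⟨h, Or.inl rfl⟩)))

lemma mem_fourBoxL (h : Ax.four ∈ X) : RuleName.fourBoxL ∈ NCKP ∪ lgRules X ∪ stRules Y :=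
  Or.inl (Or.inr (Or.inr (Or.inr ⟨h, Or.inr rfl⟩)))

lemma mem_bSt (h : Ax.b ∈ Y) : RuleName.bSt ∈ NCKP ∪ lgRules X ∪ stRules Y :=
  Or.inr ⟨.b, h, rfl⟩

lemma mem_fiveSt (h : Ax.five ∈ Y) : RuleName.fiveSt ∈ NCKP ∪ lgRules X ∪ stRules Y :=
  Or.inr ⟨.five, h, rfl⟩

lemma mem_diaR : RuleName.diaR ∈ NCKP ∪ lgRules X ∪ stRules Y :=
  Or.inl (Or.inl (by simp [NCKP]))

lemma mem_boxL : RuleName.boxL ∈ NCKP ∪ lgRules X ∪ stRules Y :=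
  Or.inl (Or.inl (by simp [NCKP]))

lemma mem_s4R (h : Ax.four ∈ X) : RuleName.s4R ∈ NCKP ∪ lgRulesS X ∪ stRulesS Y :=
  Or.inl (Or.inr (Or.inr ⟨h, Or.inl rfl⟩))

lemma mem_s4L (h : Ax.four ∈ X) : RuleName.s4L ∈ NCKP ∪ lgRulesS X ∪ stRulesS Y :=
  Or.inl (Or.inr (Or.inr ⟨h, Or.inr (Or.inl rfl)⟩))

lemma mem_s4Rdia (h : Ax.four ∈ X) : RuleName.s4Rdia ∈ NCKP ∪ lgRulesS X ∪ stRulesS Y :=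
  Or.inl (Or.inr (Or.inr ⟨h, Or.inr (Or.inr (Or.inl rfl))⟩))

lemma mem_s4Lbox (h : Ax.four ∈ X) : RuleName.s4Lbox ∈ NCKP ∪ lgRulesS X ∪ stRulesS Y :=
  Or.inl (Or.inr (Or.inr ⟨h, Or.inr (Or.inr (Or.inr rfl))⟩))

lemma mem_sbSt (hb : Ax.b ∈ Y) (h5 : Ax.five ∉ Y) :
    RuleName.sbSt ∈ NCKP ∪ lgRulesS X ∪ stRulesS Y :=
  Or.inr (Or.inr (Or.inl ⟨hb, h5, rfl⟩))

lemma mem_s5St (h5 : Ax.five ∈ Y) (hb : Ax.b ∉ Y) :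
    RuleName.s5St ∈ NCKP ∪ lgRulesS X ∪ stRulesS Y :=
  Or.inr (Or.inr (Or.inr (Or.inl ⟨h5, hb, rfl⟩)))

lemma mem_s5bSt (hb : Ax.b ∈ Y) (h5 : Ax.five ∈ Y) :
    RuleName.s5bSt ∈ NCKP ∪ lgRulesS X ∪ stRulesS Y :=
  Or.inr (Or.inr (Or.inr (Or.inr ⟨hb, h5, Or.inl rfl⟩)))

lemma mem_sb5St (hb : Ax.b ∈ Y) (h5 : Ax.five ∈ Y) :
    RuleName.sb5St ∈ NCKP ∪ lgRulesS X ∪ stRulesS Y :=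
  Or.inr (Or.inr (Or.inr (Or.inr ⟨hb, h5, Or.inr rfl⟩)))

end Aux2
section Aux3

variable {R : Set RuleName}

lemma jctR_fill (Γ o : OutCtx) (p : RHS) (Y : LHS) :
    SEq ((⟨(Γ.extC .emp).comp o, .hole .emp, p⟩ : InCtx).fill Y)
        (Γ.fillR (.br (o.fillF ⟨Y, p⟩).L (o.fillF ⟨Y, p⟩).R)) := by
  have e : SEq (o.fillF ⟨LHS.emp.comma Y, p⟩) (o.fillF ⟨Y, p⟩) :=
    OutCtx.fillF_cong (S := ⟨LHS.emp.comma Y, p⟩) (T := ⟨Y, p⟩) ⟨SEqL.unit Y, SEqR.refl p⟩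
  refine (OutCtx.comp_fillF _ _ _).trans ?_
  rw [OutCtx.extC_fillF]
  exact Γ.fillR_cong (SEqR.congBr ((SEqL.unit _).trans e.1) e.2)

lemma h_s4R (h4 : RuleName.fourDiaR ∈ R) :
    ∀ (D Γ : OutCtx) (A : Formula),
      Provable R (Γ.fillF (D.fillR (.fml A.dia))) →
      Provable R (Γ.fillF ⟨D.fillE, .fml A.dia⟩) := by
  intro D
  induction D with
  | hole Φ => exact fun Γ A h => h
  | cons Φ C ih =>
    intro Γ A h
    have h1 : Provable R ((Γ.push Φ).fillF (C.fillR (.fml A.dia))) :=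
      h.seq (OutCtx.push_fillF Γ Φ (C.fillR (.fml A.dia))).symm
    have h2 := ih (Γ.push Φ) A h1
    refine prov1 h4 (Step.fourDiaR (Γ.ext Φ) C.fillE A) h2 ?_ ?_
    · rw [OutCtx.ext_fillR]
      exact OutCtx.push_fillF Γ Φ ⟨C.fillE, .fml A.dia⟩
    · exact OutCtx.ext_fillF Γ Φ _

lemma h_s4Rdia (h4 : RuleName.fourDiaR ∈ R) (hd : RuleName.diaR ∈ R) :
    ∀ (D Γ : OutCtx) (A : Formula),
      Provable R (Γ.fillR (.br (D.fillR (.fml A)).L (D.fillR (.fml A)).R)) →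
      Provable R (Γ.fillF ⟨D.fillE.br, .fml A.dia⟩) := by
  intro D
  induction D with
  | hole Φ =>
    intro Γ A h
    exact prov1 hd (Step.diaR Γ Φ A) h (SEq.refl _) (SEq.refl _)
  | cons Φ C ih =>
    intro Γ A h
    have h1 : Provable R ((Γ.extC Φ).fillR
        (.br (C.fillR (.fml A)).L (C.fillR (.fml A)).R)) := by
      rw [OutCtx.extC_fillR]; exact h
    have h2 := ih (Γ.extC Φ) A h1
    refine prov1 h4 (Step.fourDiaR Γ (Φ.comma C.fillE.br) A) h2 ?_ ?_
    · rw [OutCtx.extC_fillF]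
      exact SEq.refl _
    · exact SEq.refl _

lemma h_climbIn (h4 : RuleName.fourBoxL ∈ R) :
    ∀ (D : OutCtx) (G : InCtx) (A : Formula),
      Provable R (G.fill (D.fillL (.fml A.box))) →
      Provable R (G.fill ((LHS.fml A.box).comma D.fillE)) := by
  intro D
  induction D with
  | hole Φ =>
    intro G A h
    exact h.seq (G.fill_cong (SEqL.comm Φ (.fml A.box)))
  | cons Φ C ih =>
    intro G A h
    have h1 : Provable R ((G.pushI Φ).fill (C.fillL (.fml A.box))) :=
      h.seq (G.pushI_fill Φ (C.fillL (.fml A.box))).symm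
    have h2 := ih (G.pushI Φ) A h1
    refine prov1 h4 (Step.fourBoxLIn (G.extI Φ) C.fillE A) h2 ?_ ?_
    · exact (G.pushI_fill Φ _).trans (G.extI_fill Φ _).symm
    · exact (G.extI_fill Φ _).trans
        (G.fill_cong (SEqL.swap Φ (.fml A.box) C.fillE.br))

lemma h_climbOut (h4 : RuleName.fourBoxL ∈ R) :
    ∀ (D Γ : OutCtx) (L : LHS) (P : RHS) (A : Formula),
      Provable R (Γ.fillF (D.fillF ⟨(LHS.fml A.box).comma L, P⟩)) →
      Provable R (Γ.fillF ⟨(LHS.fml A.box).comma (D.fillF ⟨L, P⟩).L, (D.fillF ⟨L, P⟩).R⟩) := by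
  intro D
  induction D with
  | hole Φ =>
    intro Γ L P A h
    exact h.seq (OutCtx.fillF_cong ⟨SEqL.swap Φ (.fml A.box) L, .refl _⟩)
  | cons Φ C ih =>
    intro Γ L P A h
    have h1 : Provable R ((Γ.push Φ).fillF (C.fillF ⟨(LHS.fml A.box).comma L, P⟩)) :=
      h.seq (OutCtx.push_fillF Γ Φ _).symm
    have h2 := ih (Γ.push Φ) L P A h1
    refine prov1 h4 (Step.fourBoxLOut (Γ.ext Φ) (C.fillF ⟨L, P⟩) A) h2 ?_ ?_
    · rw [OutCtx.ext_fillR]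
      exact OutCtx.push_fillF Γ Φ _
    · exact (OutCtx.ext_fillF Γ Φ _).trans
        (OutCtx.fillF_cong ⟨SEqL.comm _ _, .refl _⟩)

lemma h_s4LOut (h4 : RuleName.fourBoxL ∈ R) (Γ : OutCtx) (D : InCtx) (A : Formula)
    (h : Provable R (Γ.fillF (D.fill (.fml A.box)))) :
    Provable R (Γ.fillF ⟨(LHS.fml A.box).comma (D.fill .emp).L, (D.fill .emp).R⟩) := by
  obtain ⟨o, i, p⟩ := D
  have h1 : Provable R ((jct Γ o p).fill (i.fillL (.fml A.box))) :=
    h.seq (jct_fill Γ o p _).symm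
  have h2 := h_climbIn h4 i (jct Γ o p) A h1
  have h3 : Provable R (Γ.fillF (o.fillF ⟨(LHS.fml A.box).comma i.fillE, p⟩)) :=
    h2.seq (jct_fill Γ o p _)
  have h4' := h_climbOut h4 o Γ i.fillE p A h3
  have e : SEq (o.fillF ⟨i.fillE, p⟩) (o.fillF ⟨i.fillL .emp, p⟩) :=
    OutCtx.fillF_cong ⟨(OutCtx.fillL_emp i).symm, .refl _⟩
  exact h4'.seq (OutCtx.fillF_cong ⟨SEqL.congR' e.1, e.2⟩)

lemma h_s4LboxIn (hbL : RuleName.boxL ∈ R) (h4 : RuleName.fourBoxL ∈ R) :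
    ∀ (D : OutCtx) (G : InCtx) (A : Formula),
      Provable R (G.fill (.br (D.fillL (.fml A)))) →
      Provable R (G.fill ((LHS.fml A.box).comma D.fillE.br)) := by
  intro D
  induction D with
  | hole Φ =>
    intro G A h
    refine prov1 hbL (Step.boxLIn G Φ A) h ?_ ?_
    · exact G.fill_cong (SEqL.congBr (SEqL.comm Φ (.fml A)))
    · exact SEq.refl _
  | cons Φ C ih =>
    intro G A h
    have h1 := ih (G.extCI Φ) A (by rw [InCtx.extCI_fill]; exact h)
    refine prov1 h4 (Step.fourBoxLIn G (Φ.comma C.fillE.br) A) h1 ?_ ?_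
    · rw [InCtx.extCI_fill]
      exact G.fill_cong (SEqL.congBr (SEqL.swap Φ (.fml A.box) C.fillE.br))
    · exact SEq.refl _

lemma h_createOut (hbL : RuleName.boxL ∈ R) (h4 : RuleName.fourBoxL ∈ R) :
    ∀ (D Γ : OutCtx) (L : LHS) (P : RHS) (A : Formula),
      Provable R (Γ.fillR (.br (D.fillF ⟨(LHS.fml A).comma L, P⟩).L
        (D.fillF ⟨(LHS.fml A).comma L, P⟩).R)) →
      Provable R (Γ.fillF ⟨.fml A.box, .br (D.fillF ⟨L, P⟩).L (D.fillF ⟨L, P⟩).R⟩) := by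
  intro D
  induction D with
  | hole Φ =>
    intro Γ L P A h
    refine prov1 hbL (Step.boxLOut Γ ⟨Φ.comma L, P⟩ A) h ?_ ?_
    · exact Γ.fillR_cong (SEqR.congBr (SEqL.swap Φ (.fml A) L) (.refl _))
    · exact SEq.refl _
  | cons Φ C ih =>
    intro Γ L P A h
    have h1 := ih (Γ.extC Φ) L P A (by rw [OutCtx.extC_fillR]; exact h)
    refine prov1 h4 (Step.fourBoxLOut Γ
      ⟨Φ, .br (C.fillF ⟨L, P⟩).L (C.fillF ⟨L, P⟩).R⟩ A) h1 ?_ ?_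
    · rw [OutCtx.extC_fillF]
      exact Γ.fillR_cong (SEqR.congBr (SEqL.comm Φ _) (.refl _))
    · exact SEq.refl _

lemma h_s4LboxOut (hbL : RuleName.boxL ∈ R) (h4 : RuleName.fourBoxL ∈ R)
    (Γ : OutCtx) (D : InCtx) (A : Formula)
    (h : Provable R (Γ.fillR (.br (D.fill (.fml A)).L (D.fill (.fml A)).R))) :
    Provable R (Γ.fillF ⟨.fml A.box, .br (D.fill .emp).L (D.fill .emp).R⟩) := by
  obtain ⟨o, i, p⟩ := D
  cases i with
  | hole Φi =>
    have e0 : SEq (o.fillF ⟨Φi.comma (.fml A), p⟩) (o.fillF ⟨(LHS.fml A).comma Φi, p⟩) :=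
      OutCtx.fillF_cong ⟨SEqL.comm _ _, .refl _⟩
    have h1 := h_createOut hbL h4 o Γ Φi p A
      (h.seq (Γ.fillR_cong (SEqR.congBr e0.1 e0.2)))
    have e1 : SEq (o.fillF ⟨Φi, p⟩) (o.fillF ⟨Φi.comma .emp, p⟩) :=
      OutCtx.fillF_cong ⟨(SEqL.unitr Φi).symm, .refl _⟩
    exact h1.seq (OutCtx.fillF_cong ⟨.refl _, .congBr e1.1 e1.2⟩)
  | cons Φi Ci =>
    have h1 : Provable R
        (((⟨(Γ.extC .emp).comp o, .hole .emp, p⟩ : InCtx).extI Φi).fill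
          (.br (Ci.fillL (.fml A)))) :=
      h.seq ((InCtx.extI_fill _ Φi _).trans (jctR_fill Γ o p _)).symm
    have h2 := h_s4LboxIn hbL h4 Ci (InCtx.extI ⟨(Γ.extC .emp).comp o, .hole .emp, p⟩ Φi) A h1
    have eS : SEq (o.fillF ⟨Φi.comma ((LHS.fml A.box).comma Ci.fillE.br), p⟩)
        (o.fillF ⟨(LHS.fml A.box).comma (Φi.comma Ci.fillE.br), p⟩) :=
      OutCtx.fillF_cong ⟨SEqL.swap _ _ _, .refl _⟩
    have h3 : Provable R ((Γ.extC .emp).fillF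
        (o.fillF ⟨(LHS.fml A.box).comma (Φi.comma Ci.fillE.br), p⟩)) := by
      rw [OutCtx.extC_fillF]
      exact h2.seq (((InCtx.extI_fill _ Φi _).trans (jctR_fill Γ o p _)).trans
        (Γ.fillR_cong (SEqR.congBr (eS.1.trans (SEqL.unit _).symm) eS.2)))
    have h4' := h_climbOut h4 o (Γ.extC .emp) (Φi.comma Ci.fillE.br) p A h3
    have eUV : SEq (o.fillF ⟨Φi.comma Ci.fillE.br, p⟩)
        (o.fillF ⟨Φi.comma (.br (Ci.fillL .emp)), p⟩) :=
      OutCtx.fillF_cong ⟨SEqL.congR' (SEqL.congBr (OutCtx.fillL_emp Ci).symm), .refl _⟩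
    refine prov1 h4 (Step.fourBoxLOut Γ
      (o.fillF ⟨Φi.comma (.br (Ci.fillL .emp)), p⟩) A) h4' ?_ ?_
    · rw [OutCtx.extC_fillF]
      refine Γ.fillR_cong (SEqR.congBr ?_ ?_)
      · exact (SEqL.unit _).trans (SEqL.congR' eUV.1)
      · exact eUV.2
    · exact SEq.refl _

end Aux3
section Aux4

variable {R : Set RuleName}

lemma h_sbIn (hb : RuleName.bSt ∈ R) :
    ∀ (D : OutCtx) (G : InCtx) (Sg : LHS),
      Provable R (G.fill (D.fillL (LHS.brn D.depth Sg))) →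
      Provable R (G.fill (Sg.comma D.fillE)) := by
  intro D
  induction D with
  | hole Φ =>
    intro G Sg h
    exact h.seq (G.fill_cong (SEqL.comm Φ Sg))
  | cons Φ C ih =>
    intro G Sg h
    have e : LHS.brn (OutCtx.cons Φ C).depth Sg = LHS.brn C.depth Sg.br :=
      brn_succ' C.depth Sg
    rw [e] at h
    have h1 : Provable R ((G.pushI Φ).fill (C.fillL (LHS.brn C.depth Sg.br))) :=
      h.seq (G.pushI_fill Φ _).symm
    have h2 := ih (G.pushI Φ) Sg.br h1
    refine prov1 hb (Step.bStIn (G.extI Φ) Sg C.fillE) h2 ?_ ?_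
    · exact (G.pushI_fill Φ _).trans (G.extI_fill Φ _).symm
    · exact (G.extI_fill Φ _).trans (G.fill_cong (SEqL.swap Φ Sg C.fillE.br))

lemma h_s5In (h5 : RuleName.fiveSt ∈ R) :
    ∀ (D : OutCtx) (G : InCtx) (Sg : LHS),
      Provable R (G.fill (D.fillL Sg.br)) →
      Provable R (G.fill (Sg.br.comma D.fillE)) := by
  intro D
  induction D with
  | hole Φ =>
    intro G Sg h
    exact h.seq (G.fill_cong (SEqL.comm Φ Sg.br))
  | cons Φ C ih =>
    intro G Sg h
    have h1 : Provable R ((G.pushI Φ).fill (C.fillL Sg.br)) :=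
      h.seq (G.pushI_fill Φ _).symm
    have h2 := ih (G.pushI Φ) Sg h1
    refine prov1 h5 (Step.fiveStIn (G.extI Φ) Sg C.fillE) h2 ?_ ?_
    · exact (G.pushI_fill Φ _).trans (G.extI_fill Φ _).symm
    · exact (G.extI_fill Φ _).trans (G.fill_cong (SEqL.swap Φ Sg.br C.fillE.br))

lemma h_sbOut (hb : RuleName.bSt ∈ R) :
    ∀ (D Γ : OutCtx) (L : LHS) (P : RHS) (Sg : LHS),
      Provable R (Γ.fillF (D.fillF ⟨(LHS.brn D.depth Sg).comma L, P⟩)) →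
      Provable R (Γ.fillF ⟨Sg.comma (D.fillF ⟨L, P⟩).L, (D.fillF ⟨L, P⟩).R⟩) := by
  intro D
  induction D with
  | hole Φ =>
    intro Γ L P Sg h
    exact h.seq (OutCtx.fillF_cong ⟨SEqL.swap Φ Sg L, .refl _⟩)
  | cons Φ C ih =>
    intro Γ L P Sg h
    have e : LHS.brn (OutCtx.cons Φ C).depth Sg = LHS.brn C.depth Sg.br :=
      brn_succ' C.depth Sg
    rw [e] at h
    have h1 : Provable R ((Γ.push Φ).fillF
        (C.fillF ⟨(LHS.brn C.depth Sg.br).comma L, P⟩)) :=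
      h.seq (OutCtx.push_fillF Γ Φ _).symm
    have h2 := ih (Γ.push Φ) L P Sg.br h1
    refine prov1 hb (Step.bStDel (Γ.ext Φ) Sg (C.fillF ⟨L, P⟩)) h2 ?_ ?_
    · rw [OutCtx.ext_fillR]
      exact OutCtx.push_fillF Γ Φ _
    · exact (OutCtx.ext_fillF Γ Φ _).trans
        (OutCtx.fillF_cong ⟨SEqL.comm _ _, .refl _⟩)

lemma h_s5Out (h5 : RuleName.fiveSt ∈ R) :
    ∀ (D Γ : OutCtx) (L : LHS) (P : RHS) (Sg : LHS),
      Provable R (Γ.fillF (D.fillF ⟨Sg.br.comma L, P⟩)) →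
      Provable R (Γ.fillF ⟨Sg.br.comma (D.fillF ⟨L, P⟩).L, (D.fillF ⟨L, P⟩).R⟩) := by
  intro D
  induction D with
  | hole Φ =>
    intro Γ L P Sg h
    exact h.seq (OutCtx.fillF_cong ⟨SEqL.swap Φ Sg.br L, .refl _⟩)
  | cons Φ C ih =>
    intro Γ L P Sg h
    have h1 : Provable R ((Γ.push Φ).fillF (C.fillF ⟨Sg.br.comma L, P⟩)) :=
      h.seq (OutCtx.push_fillF Γ Φ _).symm
    have h2 := ih (Γ.push Φ) L P Sg h1
    refine prov1 h5 (Step.fiveStDel (Γ.ext Φ) Sg (C.fillF ⟨L, P⟩)) h2 ?_ ?_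
    · rw [OutCtx.ext_fillR]
      exact OutCtx.push_fillF Γ Φ _
    · exact (OutCtx.ext_fillF Γ Φ _).trans
        (OutCtx.fillF_cong ⟨SEqL.comm _ _, .refl _⟩)

lemma h_sbSig (hb : RuleName.bSt ∈ R) :
    ∀ (D Γ : OutCtx) (Sg : FullSeq),
      Provable R (Γ.fillF (D.fillF (FullSeq.nest D.depth Sg))) →
      Provable R (Γ.fillF ⟨Sg.L.comma D.fillE, Sg.R⟩) := by
  intro D
  induction D with
  | hole Φ =>
    intro Γ Sg h
    exact h.seq (OutCtx.fillF_cong ⟨SEqL.comm Φ Sg.L, .refl _⟩)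
  | cons Φ C ih =>
    intro Γ Sg h
    have e : FullSeq.nest (OutCtx.cons Φ C).depth Sg
        = FullSeq.nest C.depth ⟨.emp, .br Sg.L Sg.R⟩ := nest_succ' C.depth Sg
    rw [e] at h
    have h1 : Provable R ((Γ.push Φ).fillF
        (C.fillF (FullSeq.nest C.depth ⟨.emp, .br Sg.L Sg.R⟩))) :=
      h.seq (OutCtx.push_fillF Γ Φ _).symm
    have h2 := ih (Γ.push Φ) ⟨.emp, .br Sg.L Sg.R⟩ h1
    refine prov1 hb (Step.bStSig (Γ.ext Φ) Sg C.fillE) h2 ?_ ?_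
    · rw [OutCtx.ext_fillR]
      exact (OutCtx.push_fillF Γ Φ _).trans
        (OutCtx.fillF_cong ⟨.refl _, SEqR.congBr (SEqL.unit _) (.refl _)⟩)
    · exact (OutCtx.ext_fillF Γ Φ _).trans
        (OutCtx.fillF_cong ⟨SEqL.swap _ _ _, .refl _⟩)

lemma h_s5Sig (h5 : RuleName.fiveSt ∈ R) :
    ∀ (D Γ : OutCtx) (Sg : FullSeq),
      Provable R (Γ.fillF (D.fillF ⟨.emp, .br Sg.L Sg.R⟩)) →
      Provable R (Γ.fillF ⟨D.fillE, .br Sg.L Sg.R⟩) := by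
  intro D
  induction D with
  | hole Φ =>
    intro Γ Sg h
    exact h.seq (OutCtx.fillF_cong ⟨SEqL.unitr Φ, .refl _⟩)
  | cons Φ C ih =>
    intro Γ Sg h
    have h1 : Provable R ((Γ.push Φ).fillF (C.fillF ⟨.emp, .br Sg.L Sg.R⟩)) :=
      h.seq (OutCtx.push_fillF Γ Φ _).symm
    have h2 := ih (Γ.push Φ) Sg h1
    refine prov1 h5 (Step.fiveStSig (Γ.ext Φ) Sg C.fillE) h2 ?_ ?_
    · rw [OutCtx.ext_fillR]
      exact OutCtx.push_fillF Γ Φ _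
    · exact OutCtx.ext_fillF Γ Φ _

lemma h_sbMid (hb : RuleName.bSt ∈ R) (Γ : OutCtx) (D : InCtx) (Sg : LHS)
    (h : Provable R (Γ.fillF (D.fill (LHS.brn D.depth Sg)))) :
    Provable R (Γ.fillF ⟨Sg.comma (D.fill .emp).L, (D.fill .emp).R⟩) := by
  obtain ⟨o, i, p⟩ := D
  have e : LHS.brn (InCtx.mk o i p).depth Sg
      = LHS.brn i.depth (LHS.brn o.depth Sg) := by
    rw [brn_add, Nat.add_comm]; rfl
  rw [e] at h
  have h1 := h.seq (jct_fill Γ o p _).symm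
  have h2 := h_sbIn hb i (jct Γ o p) (LHS.brn o.depth Sg) h1
  have h3 := h2.seq (jct_fill Γ o p _)
  have h4 := h_sbOut hb o Γ i.fillE p Sg h3
  have e2 : SEq (o.fillF ⟨i.fillE, p⟩) (o.fillF ⟨i.fillL .emp, p⟩) :=
    OutCtx.fillF_cong ⟨(OutCtx.fillL_emp i).symm, .refl _⟩
  exact h4.seq (OutCtx.fillF_cong ⟨SEqL.congR' e2.1, e2.2⟩)

lemma h_s5Mid (h5 : RuleName.fiveSt ∈ R) (Γ : OutCtx) (D : InCtx) (Sg : LHS)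
    (h : Provable R (Γ.fillF (D.fill Sg.br))) :
    Provable R (Γ.fillF ⟨Sg.br.comma (D.fill .emp).L, (D.fill .emp).R⟩) := by
  obtain ⟨o, i, p⟩ := D
  have h1 := h.seq (jct_fill Γ o p _).symm
  have h2 := h_s5In h5 i (jct Γ o p) Sg h1
  have h3 := h2.seq (jct_fill Γ o p _)
  have h4 := h_s5Out h5 o Γ i.fillE p Sg h3
  have e2 : SEq (o.fillF ⟨i.fillE, p⟩) (o.fillF ⟨i.fillL .emp, p⟩) :=
    OutCtx.fillF_cong ⟨(OutCtx.fillL_emp i).symm, .refl _⟩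
  exact h4.seq (OutCtx.fillF_cong ⟨SEqL.congR' e2.1, e2.2⟩)

lemma brn_pred {k : Nat} (hk : 2 ≤ k) (Sg : LHS) :
    LHS.brn k Sg = LHS.brn (k-1) Sg.br := by
  conv_lhs => rw [show k = (k-1)+1 by omega]
  exact brn_succ' _ _

lemma nest_pred {k : Nat} (hk : 2 ≤ k) (Sg : FullSeq) :
    FullSeq.nest k Sg = FullSeq.nest (k-1) ⟨.emp, .br Sg.L Sg.R⟩ := by
  conv_lhs => rw [show k = (k-1)+1 by omega]
  exact nest_succ' _ _

lemma h_AIn (hb : RuleName.bSt ∈ R) (h5 : RuleName.fiveSt ∈ R) :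
    ∀ (D : OutCtx) (G : InCtx) (Sg : LHS) (k : Nat), 1 ≤ k → k ≤ D.depth →
      Provable R (G.fill (D.fillL (LHS.brn k Sg))) →
      Provable R (G.fill (Sg.comma D.fillE)) := by
  intro D
  induction D with
  | hole Φ =>
    intro G Sg k hk1 hk2 _
    simp only [OutCtx.depth] at hk2
    omega
  | cons Φ C ih =>
    intro G Sg k hk1 hk2 h
    by_cases hk : k = C.depth + 1
    · subst hk
      exact h_sbIn hb (OutCtx.cons Φ C) G Sg h
    · simp only [OutCtx.depth] at hk2
      have j : Provable R ((G.pushI Φ).fill (Sg.br.comma C.fillE)) := by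
        by_cases hk1' : k = 1
        · subst hk1'
          exact h_s5In h5 C (G.pushI Φ) Sg (h.seq (G.pushI_fill Φ _).symm)
        · rw [brn_pred (by omega) Sg] at h
          exact ih (G.pushI Φ) Sg.br (k-1) (by omega) (by omega)
            (h.seq (G.pushI_fill Φ _).symm)
      refine prov1 hb (Step.bStIn (G.extI Φ) Sg C.fillE) j ?_ ?_
      · exact (G.pushI_fill Φ _).trans (G.extI_fill Φ _).symm
      · exact (G.extI_fill Φ _).trans (G.fill_cong (SEqL.swap Φ Sg C.fillE.br))

lemma h_AOut (hb : RuleName.bSt ∈ R) (h5 : RuleName.fiveSt ∈ R) :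
    ∀ (D Γ : OutCtx) (L : LHS) (P : RHS) (Sg : LHS) (k : Nat), 1 ≤ k → k ≤ D.depth →
      Provable R (Γ.fillF (D.fillF ⟨(LHS.brn k Sg).comma L, P⟩)) →
      Provable R (Γ.fillF ⟨Sg.comma (D.fillF ⟨L, P⟩).L, (D.fillF ⟨L, P⟩).R⟩) := by
  intro D
  induction D with
  | hole Φ =>
    intro Γ L P Sg k hk1 hk2 _
    simp only [OutCtx.depth] at hk2
    omega
  | cons Φ C ih =>
    intro Γ L P Sg k hk1 hk2 h
    by_cases hk : k = C.depth + 1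
    · subst hk
      exact h_sbOut hb (OutCtx.cons Φ C) Γ L P Sg h
    · simp only [OutCtx.depth] at hk2
      have j : Provable R ((Γ.push Φ).fillF
          ⟨Sg.br.comma (C.fillF ⟨L, P⟩).L, (C.fillF ⟨L, P⟩).R⟩) := by
        by_cases hk1' : k = 1
        · subst hk1'
          exact h_s5Out h5 C (Γ.push Φ) L P Sg (h.seq (OutCtx.push_fillF Γ Φ _).symm)
        · rw [brn_pred (by omega) Sg] at h
          exact ih (Γ.push Φ) L P Sg.br (k-1) (by omega) (by omega)
            (h.seq (OutCtx.push_fillF Γ Φ _).symm)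
      refine prov1 hb (Step.bStDel (Γ.ext Φ) Sg (C.fillF ⟨L, P⟩)) j ?_ ?_
      · rw [OutCtx.ext_fillR]
        exact OutCtx.push_fillF Γ Φ _
      · exact (OutCtx.ext_fillF Γ Φ _).trans
          (OutCtx.fillF_cong ⟨SEqL.comm _ _, .refl _⟩)

lemma h_ASig (hb : RuleName.bSt ∈ R) (h5 : RuleName.fiveSt ∈ R) :
    ∀ (D Γ : OutCtx) (Sg : FullSeq) (k : Nat), 1 ≤ k → k ≤ D.depth →
      Provable R (Γ.fillF (D.fillF (FullSeq.nest k Sg))) →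
      Provable R (Γ.fillF ⟨Sg.L.comma D.fillE, Sg.R⟩) := by
  intro D
  induction D with
  | hole Φ =>
    intro Γ Sg k hk1 hk2 _
    simp only [OutCtx.depth] at hk2
    omega
  | cons Φ C ih =>
    intro Γ Sg k hk1 hk2 h
    by_cases hk : k = C.depth + 1
    · subst hk
      exact h_sbSig hb (OutCtx.cons Φ C) Γ Sg h
    · simp only [OutCtx.depth] at hk2
      have j : Provable R ((Γ.push Φ).fillF ⟨C.fillE, .br Sg.L Sg.R⟩) := by
        by_cases hk1' : k = 1
        · subst hk1'
          exact h_s5Sig h5 C (Γ.push Φ) Sg (h.seq (OutCtx.push_fillF Γ Φ _).symm)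
        · rw [nest_pred (by omega) Sg] at h
          have j0 := ih (Γ.push Φ) ⟨.emp, .br Sg.L Sg.R⟩ (k-1) (by omega) (by omega)
            (h.seq (OutCtx.push_fillF Γ Φ _).symm)
          exact j0.seq (OutCtx.fillF_cong ⟨SEqL.unit _, .refl _⟩)
      refine prov1 hb (Step.bStSig (Γ.ext Φ) Sg C.fillE) j ?_ ?_
      · rw [OutCtx.ext_fillR]
        exact OutCtx.push_fillF Γ Φ _
      · exact (OutCtx.ext_fillF Γ Φ _).trans
          (OutCtx.fillF_cong ⟨SEqL.swap _ _ _, .refl _⟩)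

lemma h_AMid (hb : RuleName.bSt ∈ R) (h5 : RuleName.fiveSt ∈ R)
    (Γ : OutCtx) (D : InCtx) (Sg : LHS) (k : Nat) (hk1 : 1 ≤ k) (hk2 : k ≤ D.depth)
    (h : Provable R (Γ.fillF (D.fill (LHS.brn k Sg)))) :
    Provable R (Γ.fillF ⟨Sg.comma (D.fill .emp).L, (D.fill .emp).R⟩) := by
  obtain ⟨o, i, p⟩ := D
  simp only [InCtx.depth] at hk2
  have e2 : SEq (o.fillF ⟨i.fillE, p⟩) (o.fillF ⟨i.fillL .emp, p⟩) :=
    OutCtx.fillF_cong ⟨(OutCtx.fillL_emp i).symm, .refl _⟩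
  by_cases hcase : k ≤ i.depth
  · cases o with
    | hole Φo =>
      have h1 := h.seq (jct_fill Γ (.hole Φo) p _).symm
      have h2 := h_AIn hb h5 i (jct Γ (.hole Φo) p) Sg k hk1 hcase h1
      have h3 := h2.seq (jct_fill Γ (.hole Φo) p _)
      refine h3.seq (OutCtx.fillF_cong ⟨?_, .refl _⟩)
      exact (SEqL.swap Φo Sg i.fillE).trans
        (SEqL.congR' (SEqL.congR' (OutCtx.fillL_emp i).symm))
    | cons Φo Co =>
      have j : Provable R ((jct Γ (.cons Φo Co) p).fill (Sg.br.comma i.fillE)) := by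
        by_cases hk1' : k = 1
        · subst hk1'
          exact h_s5In h5 i (jct Γ _ p) Sg (h.seq (jct_fill Γ _ p _).symm)
        · rw [brn_pred (by omega) Sg] at h
          exact h_AIn hb h5 i (jct Γ _ p) Sg.br (k-1) (by omega) (by omega)
            (h.seq (jct_fill Γ _ p _).symm)
      have j2 : Provable R (Γ.fillF ((OutCtx.cons Φo Co).fillF
          ⟨(LHS.brn 1 Sg).comma i.fillE, p⟩)) :=
        j.seq (jct_fill Γ _ p _)
      have h4 := h_AOut hb h5 (.cons Φo Co) Γ i.fillE p Sg 1 (le_refl 1)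
        (by simp only [OutCtx.depth]; omega) j2
      exact h4.seq (OutCtx.fillF_cong ⟨SEqL.congR' e2.1, e2.2⟩)
  · cases i with
    | hole Φi =>
      simp only [OutCtx.depth] at hcase hk2
      have h1 : Provable R (Γ.fillF (o.fillF ⟨(LHS.brn k Sg).comma Φi, p⟩)) :=
        h.seq (OutCtx.fillF_cong
          (OutCtx.fillF_cong (C := o) ⟨SEqL.comm _ _, SEqR.refl _⟩))
      have h4 := h_AOut hb h5 o Γ Φi p Sg k hk1 (by omega) h1
      have e3 : SEq (o.fillF ⟨Φi, p⟩) (o.fillF ⟨Φi.comma .emp, p⟩) :=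
        OutCtx.fillF_cong ⟨(SEqL.unitr Φi).symm, .refl _⟩
      exact h4.seq (OutCtx.fillF_cong ⟨SEqL.congR' e3.1, e3.2⟩)
    | cons Φi Ci =>
      simp only [OutCtx.depth] at hcase hk2
      have e : LHS.brn k Sg = LHS.brn (OutCtx.cons Φi Ci).depth
          (LHS.brn (k - (OutCtx.cons Φi Ci).depth) Sg) := by
        rw [brn_add]
        simp only [OutCtx.depth]
        congr 1
        omega
      rw [e] at h
      have h1 := h.seq (jct_fill Γ o p _).symm
      have h2 := h_sbIn hb (.cons Φi Ci) (jct Γ o p)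
        (LHS.brn (k - (OutCtx.cons Φi Ci).depth) Sg) h1
      have h3 := h2.seq (jct_fill Γ o p _)
      have h4 := h_AOut hb h5 o Γ (OutCtx.cons Φi Ci).fillE p Sg
        (k - (OutCtx.cons Φi Ci).depth)
        (by simp only [OutCtx.depth]; omega) (by simp only [OutCtx.depth]; omega) h3
      exact h4.seq (OutCtx.fillF_cong ⟨SEqL.congR' e2.1, e2.2⟩)

lemma h_sb5In (hb : RuleName.bSt ∈ R) (h5 : RuleName.fiveSt ∈ R)
    (D : OutCtx) (G : InCtx) (Sg : LHS) (k : Nat) (hk1 : 1 ≤ k) (hk2 : k ≤ D.depth)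
    (h : Provable R (G.fill (D.fillL (LHS.brn k Sg)))) :
    Provable R (G.fill (Sg.br.comma D.fillE)) := by
  by_cases hk : k = 1
  · subst hk
    exact h_s5In h5 D G Sg h
  · rw [brn_pred (by omega) Sg] at h
    exact h_AIn hb h5 D G Sg.br (k-1) (by omega) (by omega) h

lemma h_sb5Mid (hb : RuleName.bSt ∈ R) (h5 : RuleName.fiveSt ∈ R)
    (Γ : OutCtx) (D : InCtx) (Sg : LHS) (k : Nat) (hk1 : 1 ≤ k) (hk2 : k ≤ D.depth)
    (h : Provable R (Γ.fillF (D.fill (LHS.brn k Sg)))) :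
    Provable R (Γ.fillF ⟨Sg.br.comma (D.fill .emp).L, (D.fill .emp).R⟩) := by
  by_cases hk : k = 1
  · subst hk
    exact h_s5Mid h5 Γ D Sg h
  · rw [brn_pred (by omega) Sg] at h
    exact h_AMid hb h5 Γ D Sg.br (k-1) (by omega) (by omega) h

lemma h_sb5Out (hb : RuleName.bSt ∈ R) (h5 : RuleName.fiveSt ∈ R)
    (D Γ : OutCtx) (Sg : FullSeq) (k : Nat) (hk1 : 1 ≤ k) (hk2 : k ≤ D.depth)
    (h : Provable R (Γ.fillF (D.fillF (FullSeq.nest k Sg)))) :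
    Provable R (Γ.fillF ⟨D.fillE, .br Sg.L Sg.R⟩) := by
  by_cases hk : k = 1
  · subst hk
    exact h_s5Sig h5 D Γ Sg h
  · rw [nest_pred (by omega) Sg] at h
    have h1 := h_ASig hb h5 D Γ ⟨.emp, .br Sg.L Sg.R⟩ (k-1) (by omega) (by omega) h
    exact h1.seq (OutCtx.fillF_cong ⟨SEqL.unit _, .refl _⟩)

end Aux4
section Aux5

lemma fillF_emp (Γ : OutCtx) (Ψ : RHS) : SEq (Γ.fillF ⟨.emp, Ψ⟩) (Γ.fillR Ψ) := by
  induction Γ with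
  | hole Φ => exact ⟨SEqL.unitr Φ, .refl _⟩
  | cons Φ C ih => exact ⟨.refl _, .congBr ih.1 ih.2⟩

lemma dir_hard (X Y : Set Ax) :
    ∀ {S}, Provable (NCKP ∪ lgRulesS X ∪ stRulesS Y) S →
      Provable (NCKP ∪ lgRules X ∪ stRules Y) S := by
  apply transfer
  intro r prems S hr st hp
  rcases classifyS hr with hr' | ⟨h4, hc⟩ | ⟨hb, rfl⟩ | ⟨h5, rfl⟩ | ⟨hb, h5, hc⟩
  · exact prov_step hr' st hp (SEq.refl S)
  · rcases hc with rfl | rfl | rfl | rfl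
    · cases st with
      | s4R Γ Δ A => exact h_s4R (mem_fourDiaR h4) Δ Γ A (hp _ (List.mem_cons_self))
    · cases st with
      | s4LIn Γ Δ A => exact h_climbIn (mem_fourBoxL h4) Δ Γ A (hp _ (List.mem_cons_self))
      | s4LOut Γ Δ A => exact h_s4LOut (mem_fourBoxL h4) Γ Δ A (hp _ (List.mem_cons_self))
    · cases st with
      | s4Rdia Γ Δ A =>
        exact h_s4Rdia (mem_fourDiaR h4) mem_diaR Δ Γ A (hp _ (List.mem_cons_self))
    · cases st with
      | s4LboxIn Γ Δ A =>
        exact h_s4LboxIn mem_boxL (mem_fourBoxL h4) Δ Γ A (hp _ (List.mem_cons_self))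
      | s4LboxOut Γ Δ A =>
        exact h_s4LboxOut mem_boxL (mem_fourBoxL h4) Γ Δ A (hp _ (List.mem_cons_self))
  · cases st with
    | sbStIn Γ Δ Sg => exact h_sbIn (mem_bSt hb) Δ Γ Sg (hp _ (List.mem_cons_self))
    | sbStMid Γ Δ Sg => exact h_sbMid (mem_bSt hb) Γ Δ Sg (hp _ (List.mem_cons_self))
    | sbStOut Γ Δ Sg => exact h_sbSig (mem_bSt hb) Δ Γ Sg (hp _ (List.mem_cons_self))
  · cases st with
    | s5StIn Γ Δ Sg => exact h_s5In (mem_fiveSt h5) Δ Γ Sg (hp _ (List.mem_cons_self))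
    | s5StMid Γ Δ Sg => exact h_s5Mid (mem_fiveSt h5) Γ Δ Sg (hp _ (List.mem_cons_self))
    | s5StOut Γ Δ Sg => exact h_s5Sig (mem_fiveSt h5) Δ Γ Sg (hp _ (List.mem_cons_self))
  · rcases hc with rfl | rfl
    · cases st with
      | s5bStIn Γ Δ Sg k hk1 hk2 =>
        exact h_AIn (mem_bSt hb) (mem_fiveSt h5) Δ Γ Sg k hk1 hk2 (hp _ (List.mem_cons_self))
      | s5bStMid Γ Δ Sg k hk1 hk2 =>
        exact h_AMid (mem_bSt hb) (mem_fiveSt h5) Γ Δ Sg k hk1 hk2 (hp _ (List.mem_cons_self))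
      | s5bStOut Γ Δ Sg k hk1 hk2 =>
        exact h_ASig (mem_bSt hb) (mem_fiveSt h5) Δ Γ Sg k hk1 hk2 (hp _ (List.mem_cons_self))
    · cases st with
      | sb5StIn Γ Δ Sg k hk1 hk2 =>
        exact h_sb5In (mem_bSt hb) (mem_fiveSt h5) Δ Γ Sg k hk1 hk2 (hp _ (List.mem_cons_self))
      | sb5StMid Γ Δ Sg k hk1 hk2 =>
        exact h_sb5Mid (mem_bSt hb) (mem_fiveSt h5) Γ Δ Sg k hk1 hk2 (hp _ (List.mem_cons_self))
      | sb5StOut Γ Δ Sg k hk1 hk2 =>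
        exact h_sb5Out (mem_bSt hb) (mem_fiveSt h5) Δ Γ Sg k hk1 hk2 (hp _ (List.mem_cons_self))

lemma dir_easy (X Y : Set Ax) :
    ∀ {S}, Provable (NCKP ∪ lgRules X ∪ stRules Y) S →
      Provable (NCKP ∪ lgRulesS X ∪ stRulesS Y) S := by
  apply transfer
  intro r prems S hr st hp
  rcases classifyO hr with hr' | ⟨h4, hc⟩ | ⟨hb, rfl⟩ | ⟨h5, rfl⟩
  · exact prov_step hr' st hp (SEq.refl S)
  · rcases hc with rfl | rfl
    · cases st with
      | fourDiaR Γ Δ A =>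
        refine prov1 (mem_s4R h4) (Step.s4R Γ (OutCtx.cons .emp (.hole Δ)) A)
          (hp _ (List.mem_cons_self)) ?_ ?_
        · exact (fillF_emp Γ _).symm
        · exact OutCtx.fillF_cong ⟨SEqL.unit _, .refl _⟩
    · cases st with
      | fourBoxLIn Γ Δ A =>
        refine prov1 (mem_s4L h4) (Step.s4LIn Γ (OutCtx.cons .emp (.hole Δ)) A)
          (hp _ (List.mem_cons_self)) ?_ ?_
        · exact Γ.fill_cong ((SEqL.congBr (SEqL.comm _ _)).trans (SEqL.unit _).symm)
        · exact Γ.fill_cong (SEqL.congR' (SEqL.unit _))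
      | fourBoxLOut Γ Δ A =>
        refine prov1 (mem_s4L h4)
          (Step.s4LOut Γ ⟨.cons .emp (.hole .emp), .hole Δ.L, Δ.R⟩ A)
          (hp _ (List.mem_cons_self)) ?_ ?_
        · refine (Γ.fillR_cong (SEqR.congBr ?_ (.refl _))).trans (fillF_emp Γ _).symm
          exact (SEqL.comm _ _).trans (SEqL.unit _).symm
        · refine OutCtx.fillF_cong ⟨SEqL.unitr _, SEqR.congBr ?_ (.refl _)⟩
          exact (SEqL.unit _).trans (SEqL.unitr _)
  · by_cases h5 : Ax.five ∈ Y
    · cases st with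
      | bStIn Γ Sg Δ =>
        refine prov1 (mem_s5bSt hb h5)
          (Step.s5bStIn Γ (OutCtx.cons .emp (.hole Δ)) Sg 1 (le_refl 1)
            (by simp [OutCtx.depth])) (hp _ (List.mem_cons_self)) ?_ ?_
        · exact Γ.fill_cong ((SEqL.congBr (SEqL.comm _ _)).trans (SEqL.unit _).symm)
        · exact Γ.fill_cong (SEqL.congR' (SEqL.unit _))
      | bStSig Γ Sg Δ =>
        refine prov1 (mem_s5bSt hb h5)
          (Step.s5bStOut Γ (OutCtx.cons .emp (.hole Δ)) Sg 1 (le_refl 1)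
            (by simp [OutCtx.depth])) (hp _ (List.mem_cons_self)) ?_ ?_
        · exact (Γ.fillR_cong (SEqR.congBr (SEqL.unitr Δ).symm (.refl _))).trans
            (fillF_emp Γ _).symm
        · exact OutCtx.fillF_cong ⟨SEqL.congR' (SEqL.unit _), .refl _⟩
      | bStDel Γ Sg Δ =>
        refine prov1 (mem_s5bSt hb h5)
          (Step.s5bStMid Γ ⟨.cons .emp (.hole .emp), .hole Δ.L, Δ.R⟩ Sg 1 (le_refl 1)
            (by simp [InCtx.depth, OutCtx.depth])) (hp _ (List.mem_cons_self)) ?_ ?_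
        · refine (Γ.fillR_cong (SEqR.congBr ?_ (.refl _))).trans (fillF_emp Γ _).symm
          exact (SEqL.comm _ _).trans (SEqL.unit _).symm
        · exact OutCtx.fillF_cong ⟨SEqL.unitr _,
            SEqR.congBr ((SEqL.unit _).trans (SEqL.unitr _)) (.refl _)⟩
    · cases st with
      | bStIn Γ Sg Δ =>
        refine prov1 (mem_sbSt hb h5) (Step.sbStIn Γ (OutCtx.cons .emp (.hole Δ)) Sg)
          (hp _ (List.mem_cons_self)) ?_ ?_
        · exact Γ.fill_cong ((SEqL.congBr (SEqL.comm _ _)).trans (SEqL.unit _).symm)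
        · exact Γ.fill_cong (SEqL.congR' (SEqL.unit _))
      | bStSig Γ Sg Δ =>
        refine prov1 (mem_sbSt hb h5) (Step.sbStOut Γ (OutCtx.cons .emp (.hole Δ)) Sg)
          (hp _ (List.mem_cons_self)) ?_ ?_
        · exact (Γ.fillR_cong (SEqR.congBr (SEqL.unitr Δ).symm (.refl _))).trans
            (fillF_emp Γ _).symm
        · exact OutCtx.fillF_cong ⟨SEqL.congR' (SEqL.unit _), .refl _⟩
      | bStDel Γ Sg Δ =>
        refine prov1 (mem_sbSt hb h5)
          (Step.sbStMid Γ ⟨.cons .emp (.hole .emp), .hole Δ.L, Δ.R⟩ Sg)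
          (hp _ (List.mem_cons_self)) ?_ ?_
        · refine (Γ.fillR_cong (SEqR.congBr ?_ (.refl _))).trans (fillF_emp Γ _).symm
          exact (SEqL.comm _ _).trans (SEqL.unit _).symm
        · exact OutCtx.fillF_cong ⟨SEqL.unitr _,
            SEqR.congBr ((SEqL.unit _).trans (SEqL.unitr _)) (.refl _)⟩
  · by_cases hb : Ax.b ∈ Y
    · cases st with
      | fiveStIn Γ Sg Δ =>
        refine prov1 (mem_sb5St hb h5)
          (Step.sb5StIn Γ (OutCtx.cons .emp (.hole Δ)) Sg 1 (le_refl 1)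
            (by simp [OutCtx.depth])) (hp _ (List.mem_cons_self)) ?_ ?_
        · exact Γ.fill_cong ((SEqL.congBr (SEqL.comm _ _)).trans (SEqL.unit _).symm)
        · exact Γ.fill_cong (SEqL.congR' (SEqL.unit _))
      | fiveStSig Γ Sg Δ =>
        refine prov1 (mem_sb5St hb h5)
          (Step.sb5StOut Γ (OutCtx.cons .emp (.hole Δ)) Sg 1 (le_refl 1)
            (by simp [OutCtx.depth])) (hp _ (List.mem_cons_self)) ?_ ?_
        · exact (Γ.fillR_cong (SEqR.congBr (SEqL.unitr Δ).symm (.refl _))).trans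
            (fillF_emp Γ _).symm
        · exact OutCtx.fillF_cong ⟨SEqL.unit _, .refl _⟩
      | fiveStDel Γ Sg Δ =>
        refine prov1 (mem_sb5St hb h5)
          (Step.sb5StMid Γ ⟨.cons .emp (.hole .emp), .hole Δ.L, Δ.R⟩ Sg 1 (le_refl 1)
            (by simp [InCtx.depth, OutCtx.depth])) (hp _ (List.mem_cons_self)) ?_ ?_
        · refine (Γ.fillR_cong (SEqR.congBr ?_ (.refl _))).trans (fillF_emp Γ _).symm
          exact (SEqL.comm _ _).trans (SEqL.unit _).symm
        · exact OutCtx.fillF_cong ⟨SEqL.unitr _,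
            SEqR.congBr ((SEqL.unit _).trans (SEqL.unitr _)) (.refl _)⟩
    · cases st with
      | fiveStIn Γ Sg Δ =>
        refine prov1 (mem_s5St h5 hb) (Step.s5StIn Γ (OutCtx.cons .emp (.hole Δ)) Sg)
          (hp _ (List.mem_cons_self)) ?_ ?_
        · exact Γ.fill_cong ((SEqL.congBr (SEqL.comm _ _)).trans (SEqL.unit _).symm)
        · exact Γ.fill_cong (SEqL.congR' (SEqL.unit _))
      | fiveStSig Γ Sg Δ =>
        refine prov1 (mem_s5St h5 hb) (Step.s5StOut Γ (OutCtx.cons .emp (.hole Δ)) Sg)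
          (hp _ (List.mem_cons_self)) ?_ ?_
        · exact (Γ.fillR_cong (SEqR.congBr (SEqL.unitr Δ).symm (.refl _))).trans
            (fillF_emp Γ _).symm
        · exact OutCtx.fillF_cong ⟨SEqL.unit _, .refl _⟩
      | fiveStDel Γ Sg Δ =>
        refine prov1 (mem_s5St h5 hb)
          (Step.s5StMid Γ ⟨.cons .emp (.hole .emp), .hole Δ.L, Δ.R⟩ Sg)
          (hp _ (List.mem_cons_self)) ?_ ?_
        · refine (Γ.fillR_cong (SEqR.congBr ?_ (.refl _))).trans (fillF_emp Γ _).symm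
          exact (SEqL.comm _ _).trans (SEqL.unit _).symm
        · exact OutCtx.fillF_cong ⟨SEqL.unitr _,
            SEqR.congBr ((SEqL.unit _).trans (SEqL.unitr _)) (.refl _)⟩

end Aux5

/-- Proposition 6.5: for a safe pair ⟨X,Y⟩, a full sequent is
provable in NCK' + X^{↓}_s + Y•_s iff it is provable in NCK' + X^{↓} + Y•. -/
theorem statement17 (X Y : Set Ax) (hs : SafePair X Y) (Γ : FullSeq) :
    Provable (NCKP ∪ lgRulesS X ∪ stRulesS Y) Γ ↔
    Provable (NCKP ∪ lgRules X ∪ stRules Y) Γ := by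
  exact ⟨fun h => dir_hard X Y h, fun h => dir_easy X Y h⟩
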